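/- arXiv:2011.07752 — 9 statements merged into one kernel-verified Lean document; each statement's English description precedes it below -/
import Mathlib

section
/- Let V̂ = V ∪ A be a finite node set, where A is a set of auxiliary nodes disjoint from V. Let G be a directed graph on V̂ with nonnegative edge weights w, and for T ⊆ V̂ let cut_G(T) = Σ_{(u,v) edge of G, u∈T, v∉T} w_{uv}. Let cut_H be a nonnegative set function on subsets of V such that for every S ⊆ V, cut_H(S) = min{ cut_G(T) : T ⊆ V̂, T ∩ V = S }. Let d : V → ℝ_{>0} be a degree vector, extended by d_u = 0 for u ∈ A; set vol(T) = Σ_{v ∈ T∩V} d_v, and define conductances φ_G(T) = cut_G(T)/min(vol(T), vol(V̂) − vol(T)) for T ⊆ V̂ with 0 < vol(T) < vol(V̂), and φ_H(S) = cut_H(S)/min(vol(S), vol(V) − vol(S)) for S ⊆ V with 0 < vol(S) < vol(V). Then: if T* minimizes φ_G over all T ⊆ V̂ with 0 < vol(T) < vol(V̂), the set S* = T* ∩ V minimizes φ_H over all S ⊆ V with 0 < vol(S) < vol(V), and φ_H(S*) = φ_G(T*). -/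
open Finset

noncomputable section

/-- Directed cut of a node set `T`: total weight of edges leaving `T`. -/
def cutG {N : Type*} [Fintype N] [DecidableEq N] (w : N → N → ℝ) (T : Finset N) : ℝ :=
  ∑ u ∈ T, ∑ v ∈ Tᶜ, w u v

/-- Volume of `T`, counting only the degrees of original (non-auxiliary) nodes. -/
def volD {N : Type*} [DecidableEq N] (V : Finset N) (d : N → ℝ) (T : Finset N) : ℝ :=
  ∑ v ∈ T ∩ V, d v

end

private theorem div_le_div_of_nonneg_right' {a b c : ℝ} (h : a ≤ b) (hc : 0 < c) :
    a / c ≤ b / c := by gcongr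

/-- Conductance preservation for hypergraph-to-graph reductions: if the directed graph
`G` on `V ∪ A` represents the hypergraph cut function `cut_H` (each `cut_H S` is the
minimum of `cut_G` over node sets `T` with `T ∩ V = S`), auxiliary nodes get degree `0`,
and `T*` minimizes the conductance `φ_G`, then `S* = T* ∩ V` minimizes the hypergraph
conductance `φ_H` and `φ_H(S*) = φ_G(T*)`. -/
theorem conductance_preserving {N : Type*} [Fintype N] [DecidableEq N]
    (V A : Finset N) (hdisj : Disjoint V A) (hcover : V ∪ A = univ)
    (w : N → N → ℝ) (hw : ∀ u v, 0 ≤ w u v)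
    (cutH : Finset N → ℝ) (hcutH0 : ∀ S ⊆ V, 0 ≤ cutH S)
    (hcutH : ∀ S ⊆ V,
      IsLeast {c : ℝ | ∃ T : Finset N, T ∩ V = S ∧ cutG w T = c} (cutH S))
    (d : N → ℝ) (hdV : ∀ v ∈ V, 0 < d v) (hdA : ∀ u ∈ A, d u = 0)
    (Tstar : Finset N)
    (hfeas0 : 0 < volD V d Tstar) (hfeasM : volD V d Tstar < volD V d univ)
    (hmin : ∀ T : Finset N, 0 < volD V d T → volD V d T < volD V d univ →
      cutG w Tstar / min (volD V d Tstar) (volD V d univ - volD V d Tstar) ≤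
        cutG w T / min (volD V d T) (volD V d univ - volD V d T)) :
    (∀ S ⊆ V, 0 < volD V d S → volD V d S < volD V d V →
      cutH (Tstar ∩ V) /
          min (volD V d (Tstar ∩ V)) (volD V d V - volD V d (Tstar ∩ V)) ≤
        cutH S / min (volD V d S) (volD V d V - volD V d S)) ∧
      cutH (Tstar ∩ V) /
          min (volD V d (Tstar ∩ V)) (volD V d V - volD V d (Tstar ∩ V)) =
        cutG w Tstar / min (volD V d Tstar) (volD V d univ - volD V d Tstar) := by

  have hvol : ∀ T : Finset N, volD V d (T ∩ V) = volD V d T := by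
    intro T; unfold volD; rw [inter_assoc, inter_self]
  have hvolU : volD V d univ = volD V d V := by
    unfold volD; rw [univ_inter, inter_self]
  have hSsub : Tstar ∩ V ⊆ V := inter_subset_right
  have hvS : volD V d (Tstar ∩ V) = volD V d Tstar := hvol Tstar
  have key : ∀ S ⊆ V, 0 < volD V d S → volD V d S < volD V d V →
      cutG w Tstar / min (volD V d Tstar) (volD V d univ - volD V d Tstar) ≤
        cutH S / min (volD V d S) (volD V d V - volD V d S) := by
    intro S hS h1 h2
    obtain ⟨⟨T₀, hT0, hc0⟩, -⟩ := hcutH S hS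
    have hv0 : volD V d T₀ = volD V d S := by rw [← hvol T₀, hT0]
    have h := hmin T₀ (by rw [hv0]; exact h1) (by rw [hv0, hvolU]; exact h2)
    rw [hvolU]; rwa [hv0, hvolU, hc0] at h
  have hmpos : 0 < min (volD V d Tstar) (volD V d univ - volD V d Tstar) :=
    lt_min hfeas0 (sub_pos.2 hfeasM)
  have hle : cutH (Tstar ∩ V) /
      min (volD V d (Tstar ∩ V)) (volD V d V - volD V d (Tstar ∩ V)) ≤
      cutG w Tstar / min (volD V d Tstar) (volD V d univ - volD V d Tstar) := by
    have hc : cutH (Tstar ∩ V) ≤ cutG w Tstar :=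
      (hcutH (Tstar ∩ V) hSsub).2 ⟨Tstar, rfl, rfl⟩
    rw [hvS, ← hvolU]
    exact div_le_div_of_nonneg_right' hc hmpos
  have heq : cutH (Tstar ∩ V) /
      min (volD V d (Tstar ∩ V)) (volD V d V - volD V d (Tstar ∩ V)) =
      cutG w Tstar / min (volD V d Tstar) (volD V d univ - volD V d Tstar) :=
    le_antisymm hle (key (Tstar ∩ V) hSsub (by rw [hvS]; exact hfeas0)
      (by rw [hvS, ← hvolU]; exact hfeasM))
  exact ⟨fun S hS h1 h2 => heq ▸ key S hS h1 h2, heq⟩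
end

section
/- Consider a finite directed graph on node set N = {s} ∪ V ∪ A ∪ {t}, where A consists of pairs of auxiliary nodes (a_e, b_e) indexed by a finite collection 𝓔 of hyperedges e ⊆ V: for each e the graph has edges (v, a_e) and (b_e, v) with positive weights for every v ∈ e, and an edge (a_e, b_e) with positive weight; in addition, for a fixed seed set R ⊆ V and degrees d_i > 0 (i ∈ V) and γ > 0, there is an edge (s, r) of weight γ d_r for each r ∈ R and an edge (v, t) of weight γ d_v for each v ∈ V∖R; there are no other edges. Fix κ > 0, let (t)₊ = max{t,0}, and consider minimizing F(x) = ½ Σ_{(i,j) edge} w_{ij} ((x_i − x_j)₊)² + κγ Σ_{i∈V} d_i x_i over all x : N → ℝ with x_s = 1, x_t = 0 and x ≥ 0. For any node u ≠ s,t define the residual g_u(x) = (1/γ)[ Σ_{(j,u) edge} w_{ju}(x_j − x_u)₊ − Σ_{(u,j) edge} w_{uj}(x_u − x_j)₊ ]. Then a feasible point x* is a global minimizer of F if and only if: (i) g_i(x*) ≤ κ d_i for every i ∈ V; (ii) (κ d_i − g_i(x*)) x*_i = 0 for every i ∈ V; and (iii) g_u(x*) = 0 for every auxiliary node u ∈ A.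 -/
open Finset

/-- Nodes of the localized directed cut graph: source `s`, sink `t`, original vertices,
and the two auxiliary nodes `a_e`, `b_e` of each hyperedge gadget. -/
abbrev LNode (V E : Type) : Type := Unit ⊕ Unit ⊕ V ⊕ E ⊕ E

namespace LNode

def s {V E : Type} : LNode V E := Sum.inl ()
def t {V E : Type} : LNode V E := Sum.inr (Sum.inl ())
def orig {V E : Type} (v : V) : LNode V E := Sum.inr (Sum.inr (Sum.inl v))
def auxA {V E : Type} (ε : E) : LNode V E := Sum.inr (Sum.inr (Sum.inr (Sum.inl ε)))
def auxB {V E : Type} (ε : E) : LNode V E := Sum.inr (Sum.inr (Sum.inr (Sum.inr ε)))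

end LNode

open scoped Classical in
/-- Edge weights of the localized directed cut graph: `(s,r)` with weight `γ d_r` for
`r ∈ R`, `(v,t)` with weight `γ d_v` for `v ∉ R`, `(v, a_ε)` and `(b_ε, v)` for `v ∈ ε`,
`(a_ε, b_ε)`, and no other edges (weight `0`). -/
noncomputable def lhWeight {V E : Type} (e : E → Finset V)
    (wva : V → E → ℝ) (wbv : E → V → ℝ) (wab : E → ℝ)
    (R : Finset V) (d : V → ℝ) (γ : ℝ) : LNode V E → LNode V E → ℝ
  | Sum.inl _, Sum.inr (Sum.inr (Sum.inl v)) => if v ∈ R then γ * d v else 0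
  | Sum.inr (Sum.inr (Sum.inl v)), Sum.inr (Sum.inl _) => if v ∈ R then 0 else γ * d v
  | Sum.inr (Sum.inr (Sum.inl v)), Sum.inr (Sum.inr (Sum.inr (Sum.inl ε))) =>
      if v ∈ e ε then wva v ε else 0
  | Sum.inr (Sum.inr (Sum.inr (Sum.inr ε))), Sum.inr (Sum.inr (Sum.inl v)) =>
      if v ∈ e ε then wbv ε v else 0
  | Sum.inr (Sum.inr (Sum.inr (Sum.inl ε))), Sum.inr (Sum.inr (Sum.inr (Sum.inr ε'))) =>
      if ε = ε' then wab ε else 0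
  | _, _ => 0

/-- The LHQD objective `F(x) = ½ Σ_{(i,j)} w_{ij} ((x_i − x_j)₊)² + κγ Σ_{i∈V} d_i x_i`. -/
noncomputable def lhF {V E : Type} [Fintype V] [Fintype E]
    (w : LNode V E → LNode V E → ℝ) (d : V → ℝ) (κ γ : ℝ) (x : LNode V E → ℝ) : ℝ :=
  (1 / 2) * ∑ i : LNode V E, ∑ j : LNode V E, w i j * (max (x i - x j) 0) ^ 2
    + κ * γ * ∑ v : V, d v * x (LNode.orig v)

/-- The residual `g_u(x)` of a node `u`. -/
noncomputable def lhRes {V E : Type} [Fintype V] [Fintype E]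
    (w : LNode V E → LNode V E → ℝ) (γ : ℝ) (x : LNode V E → ℝ) (u : LNode V E) : ℝ :=
  (1 / γ) * (∑ j : LNode V E, w j u * max (x j - x u) 0
    - ∑ j : LNode V E, w u j * max (x u - x j) 0)


lemma maxSq_lower (a b : ℝ) :
    (max a 0) ^ 2 + 2 * (max a 0) * (b - a) ≤ (max b 0) ^ 2 := by
  have hA : 0 ≤ max a 0 := le_max_right a 0
  have hAa : max a 0 * (max a 0 - a) = 0 := by
    rcases le_or_gt a 0 with h | h
    · rw [max_eq_right h]; ring
    · rw [max_eq_left h.le]; ring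
  have hb : b ≤ max b 0 := le_max_left b 0
  nlinarith [sq_nonneg (max a 0 - max b 0), mul_le_mul_of_nonneg_left hb hA]

lemma maxSq_upper (a b : ℝ) :
    (max b 0) ^ 2 ≤ (max a 0) ^ 2 + 2 * (max a 0) * (b - a) + (b - a) ^ 2 := by
  have hA : 0 ≤ max a 0 := le_max_right a 0
  have haA : a ≤ max a 0 := le_max_left a 0
  rcases le_or_gt b 0 with h | h
  · rw [max_eq_right h]
    nlinarith [sq_nonneg (max a 0 + (b - a))]
  · rw [max_eq_left h.le]
    nlinarith

section Generic
variable {ι : Type*} [Fintype ι] [DecidableEq ι]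

noncomputable def gF (w : ι → ι → ℝ) (ℓ : ι → ℝ) (x : ι → ℝ) : ℝ :=
  (1 / 2) * ∑ i : ι, ∑ j : ι, w i j * (max (x i - x j) 0) ^ 2 + ∑ u : ι, ℓ u * x u

noncomputable def gD (w : ι → ι → ℝ) (ℓ : ι → ℝ) (x : ι → ℝ) (u : ι) : ℝ :=
  ℓ u + ∑ j : ι, w u j * max (x u - x j) 0 - ∑ j : ι, w j u * max (x j - x u) 0

lemma sum_gD_mul (w : ι → ι → ℝ) (ℓ : ι → ℝ) (x z : ι → ℝ) :
    ∑ u : ι, gD w ℓ x u * z u =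
      ∑ u : ι, ℓ u * z u +
        ∑ i : ι, ∑ j : ι, w i j * max (x i - x j) 0 * (z i - z j) := by
  have h2 : ∑ u : ι, ∑ j : ι, w j u * max (x j - x u) 0 * z u
      = ∑ i : ι, ∑ j : ι, w i j * max (x i - x j) 0 * z j := Finset.sum_comm
  calc ∑ u : ι, gD w ℓ x u * z u
      = ∑ u : ι, (ℓ u * z u + (∑ j : ι, w u j * max (x u - x j) 0 * z u)
          - ∑ j : ι, w j u * max (x j - x u) 0 * z u) := by
        refine Finset.sum_congr rfl fun u _ => ?_
        simp only [gD, sub_mul, add_mul, Finset.sum_mul]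
    _ = ∑ u : ι, ℓ u * z u + (∑ u : ι, ∑ j : ι, w u j * max (x u - x j) 0 * z u)
          - ∑ u : ι, ∑ j : ι, w j u * max (x j - x u) 0 * z u := by
        rw [Finset.sum_sub_distrib, Finset.sum_add_distrib]
    _ = ∑ u : ι, ℓ u * z u +
        ∑ i : ι, ∑ j : ι, w i j * max (x i - x j) 0 * (z i - z j) := by
        rw [h2]
        simp only [mul_sub, Finset.sum_sub_distrib]
        ring

lemma gF_lower (w : ι → ι → ℝ) (ℓ : ι → ℝ) (hw : ∀ i j, 0 ≤ w i j) (x y : ι → ℝ) :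
    gF w ℓ x + ∑ u : ι, gD w ℓ x u * (y u - x u) ≤ gF w ℓ y := by
  have hz := sum_gD_mul w ℓ x (fun u => y u - x u)
  have hsum : ∑ i : ι, ∑ j : ι, (w i j * (max (x i - x j) 0) ^ 2
        + 2 * (w i j * max (x i - x j) 0 * ((y i - x i) - (y j - x j))))
      ≤ ∑ i : ι, ∑ j : ι, w i j * (max (y i - y j) 0) ^ 2 := by
    refine Finset.sum_le_sum fun i _ => Finset.sum_le_sum fun j _ => ?_
    have h1 := maxSq_lower (x i - x j) (y i - y j)
    have h2 := mul_le_mul_of_nonneg_left h1 (hw i j)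
    nlinarith [h2]
  have hexp : ∑ i : ι, ∑ j : ι, (w i j * (max (x i - x j) 0) ^ 2
        + 2 * (w i j * max (x i - x j) 0 * ((y i - x i) - (y j - x j))))
      = ∑ i : ι, ∑ j : ι, w i j * (max (x i - x j) 0) ^ 2
        + 2 * ∑ i : ι, ∑ j : ι, w i j * max (x i - x j) 0 * ((y i - x i) - (y j - x j)) := by
    simp only [Finset.sum_add_distrib, Finset.mul_sum]
  have hL : ∑ u : ι, ℓ u * x u + ∑ u : ι, ℓ u * (y u - x u) = ∑ u : ι, ℓ u * y u := by
    rw [← Finset.sum_add_distrib]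
    exact Finset.sum_congr rfl fun u _ => by ring
  simp only [gF]
  rw [hz]
  linarith [hsum, hexp, hL]

lemma gF_upper (w : ι → ι → ℝ) (ℓ : ι → ℝ) (hw : ∀ i j, 0 ≤ w i j) (x y : ι → ℝ) :
    gF w ℓ y ≤ gF w ℓ x + ∑ u : ι, gD w ℓ x u * (y u - x u)
      + (1 / 2) * ∑ i : ι, ∑ j : ι, w i j * ((y i - x i) - (y j - x j)) ^ 2 := by
  have hz := sum_gD_mul w ℓ x (fun u => y u - x u)
  have hsum : ∑ i : ι, ∑ j : ι, w i j * (max (y i - y j) 0) ^ 2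
      ≤ ∑ i : ι, ∑ j : ι, (w i j * (max (x i - x j) 0) ^ 2
        + 2 * (w i j * max (x i - x j) 0 * ((y i - x i) - (y j - x j)))
        + w i j * ((y i - x i) - (y j - x j)) ^ 2) := by
    refine Finset.sum_le_sum fun i _ => Finset.sum_le_sum fun j _ => ?_
    have h1 := maxSq_upper (x i - x j) (y i - y j)
    have h2 := mul_le_mul_of_nonneg_left h1 (hw i j)
    nlinarith [h2]
  have hexp : ∑ i : ι, ∑ j : ι, (w i j * (max (x i - x j) 0) ^ 2
        + 2 * (w i j * max (x i - x j) 0 * ((y i - x i) - (y j - x j)))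
        + w i j * ((y i - x i) - (y j - x j)) ^ 2)
      = ∑ i : ι, ∑ j : ι, w i j * (max (x i - x j) 0) ^ 2
        + 2 * ∑ i : ι, ∑ j : ι, w i j * max (x i - x j) 0 * ((y i - x i) - (y j - x j))
        + ∑ i : ι, ∑ j : ι, w i j * ((y i - x i) - (y j - x j)) ^ 2 := by
    simp only [Finset.sum_add_distrib, Finset.mul_sum]
  have hL : ∑ u : ι, ℓ u * x u + ∑ u : ι, ℓ u * (y u - x u) = ∑ u : ι, ℓ u * y u := by
    rw [← Finset.sum_add_distrib]
    exact Finset.sum_congr rfl fun u _ => by ring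
  simp only [gF]
  rw [hz]
  linarith [hsum, hexp, hL]

lemma g_min_kkt (w : ι → ι → ℝ) (ℓ : ι → ℝ) (hw : ∀ i j, 0 ≤ w i j)
    (s t : ι) (x : ι → ℝ) (hxs : x s = 1) (hxt : x t = 0) (hx0 : ∀ u, 0 ≤ x u) :
    (∀ y : ι → ℝ, y s = 1 → y t = 0 → (∀ u, 0 ≤ y u) → gF w ℓ x ≤ gF w ℓ y) ↔
      (∀ u, u ≠ s → u ≠ t → 0 ≤ gD w ℓ x u ∧ gD w ℓ x u * x u = 0) := by
  set W : ℝ := ∑ i : ι, ∑ j : ι, w i j with hWdef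
  have hW : 0 ≤ W :=
    Finset.sum_nonneg fun i _ => Finset.sum_nonneg fun j _ => hw i j
  constructor
  · intro hmin u hus hut
    set D : ℝ := gD w ℓ x u with hDdef
    -- general perturbation estimate
    have step : ∀ c : ℝ, c ≠ 0 → 0 ≤ x u + c → 0 ≤ c * D + c ^ 2 * W := by
      intro c hc hxc
      set y : ι → ℝ := Function.update x u (x u + c) with hydef
      have hyu : y u = x u + c := Function.update_self u _ x
      have hyo : ∀ v, v ≠ u → y v = x v := fun v hv => Function.update_of_ne hv _ x
      have hys : y s = 1 := by rw [hyo s (Ne.symm hus)]; exact hxs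
      have hyt : y t = 0 := by rw [hyo t (Ne.symm hut)]; exact hxt
      have hy0 : ∀ v, 0 ≤ y v := by
        intro v
        by_cases hv : v = u
        · rw [hv, hyu]; exact hxc
        · rw [hyo v hv]; exact hx0 v
      have h1 := hmin y hys hyt hy0
      have h2 := gF_upper w ℓ hw x y
      have h3 : ∑ v : ι, gD w ℓ x v * (y v - x v) = D * c := by
        have : ∀ v : ι, gD w ℓ x v * (y v - x v)
            = if v = u then gD w ℓ x v * c else 0 := by
          intro v
          by_cases hv : v = u
          · simp [hv, hyu]
          · simp [hv, hyo v hv]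
        rw [Finset.sum_congr rfl fun v _ => this v, Finset.sum_ite_eq' Finset.univ u
          (fun v => gD w ℓ x v * c)]
        simp [hDdef]
      have h4 : ∑ i : ι, ∑ j : ι, w i j * ((y i - x i) - (y j - x j)) ^ 2 ≤ W * c ^ 2 := by
        rw [hWdef, Finset.sum_mul]
        refine Finset.sum_le_sum fun i _ => ?_
        rw [Finset.sum_mul]
        refine Finset.sum_le_sum fun j _ => ?_
        refine mul_le_mul_of_nonneg_left ?_ (hw i j)
        have hdi : y i - x i = if i = u then c else 0 := by
          by_cases hi : i = u
          · simp [hi, hyu]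
          · simp [hi, hyo i hi]
        have hdj : y j - x j = if j = u then c else 0 := by
          by_cases hj : j = u
          · simp [hj, hyu]
          · simp [hj, hyo j hj]
        rw [hdi, hdj]
        split_ifs <;> simp <;> nlinarith [sq_nonneg c]
      rw [h3] at h2
      nlinarith [h1, h2, h4]
    -- positive side: D ≥ 0
    have hD0 : 0 ≤ D := by
      by_contra hD
      push_neg at hD
      set c : ℝ := -D / (W + 1) with hcdef
      have hc : 0 < c := div_pos (by linarith) (by linarith)
      have hkey : c * (W + 1) = -D := by
        rw [hcdef, div_mul_cancel₀ _ (by linarith : W + 1 ≠ 0)]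
      have := step c (ne_of_gt hc) (by have := hx0 u; linarith)
      nlinarith [this, hc, hkey, mul_pos hc hc]
    refine ⟨hD0, ?_⟩
    rcases eq_or_lt_of_le (hx0 u) with hxu | hxu
    · rw [← hxu, mul_zero]
    · -- x u > 0 : show D ≤ 0
      have hDle : D ≤ 0 := by
        by_contra hD
        push_neg at hD
        set m : ℝ := min (x u) (D / (W + 1)) with hmdef
        have hm : 0 < m := lt_min hxu (div_pos hD (by linarith))
        have hm1 : m ≤ x u := min_le_left _ _
        have hm2 : m * (W + 1) ≤ D := by
          have := min_le_right (x u) (D / (W + 1))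
          rw [hmdef]
          calc m * (W + 1) ≤ (D / (W + 1)) * (W + 1) := by
                apply mul_le_mul_of_nonneg_right this (by linarith)
            _ = D := by field_simp
        have hstep := step (-(m / 2)) (by intro h; nlinarith) (by linarith)
        nlinarith [hstep, hm, hW, mul_nonneg hm.le hW]
      have : D = 0 := le_antisymm hDle hD0
      rw [this, zero_mul]
  · intro hkkt y hys hyt hy0
    have hlow := gF_lower w ℓ hw x y
    have hnn : 0 ≤ ∑ u : ι, gD w ℓ x u * (y u - x u) := by
      refine Finset.sum_nonneg fun u _ => ?_
      by_cases hus : u = s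
      · rw [hus, hys, hxs]; simp
      · by_cases hut : u = t
        · rw [hut, hyt, hxt]; simp
        · obtain ⟨h1, h2⟩ := hkkt u hus hut
          have : gD w ℓ x u * (y u - x u) = gD w ℓ x u * y u := by
            rw [mul_sub, h2]; ring
          rw [this]
          exact mul_nonneg h1 (hy0 u)
    linarith

end Generic


/-- KKT characterization of global minimizers of the localized hypergraph quadratic
diffusion (LHQD) objective on the localized directed cut graph: a feasible `x*`
(`x*_s = 1`, `x*_t = 0`, `x* ≥ 0`) is a global minimizer iff (i) `g_i ≤ κ d_i` on
original nodes, (ii) `(κ d_i − g_i) x*_i = 0` on original nodes, and (iii) `g_u = 0`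
on all auxiliary nodes. -/
theorem lhqd_kkt {V E : Type} [Fintype V] [Fintype E] [DecidableEq V] [DecidableEq E]
    (e : E → Finset V) (wva : V → E → ℝ) (wbv : E → V → ℝ) (wab : E → ℝ)
    (R : Finset V) (d : V → ℝ) (γ κ : ℝ)
    (hwva : ∀ ε, ∀ v ∈ e ε, 0 < wva v ε) (hwbv : ∀ ε, ∀ v ∈ e ε, 0 < wbv ε v)
    (hwab : ∀ ε, 0 < wab ε) (hd : ∀ v, 0 < d v) (hγ : 0 < γ) (hκ : 0 < κ)
    (x : LNode V E → ℝ)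
    (hxs : x LNode.s = 1) (hxt : x LNode.t = 0) (hx0 : ∀ u, 0 ≤ x u) :
    (∀ y : LNode V E → ℝ, y LNode.s = 1 → y LNode.t = 0 → (∀ u, 0 ≤ y u) →
        lhF (lhWeight e wva wbv wab R d γ) d κ γ x ≤
          lhF (lhWeight e wva wbv wab R d γ) d κ γ y) ↔
      ((∀ v : V, lhRes (lhWeight e wva wbv wab R d γ) γ x (LNode.orig v) ≤ κ * d v) ∧
        (∀ v : V,
          (κ * d v - lhRes (lhWeight e wva wbv wab R d γ) γ x (LNode.orig v)) *
            x (LNode.orig v) = 0) ∧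
        (∀ ε : E, lhRes (lhWeight e wva wbv wab R d γ) γ x (LNode.auxA ε) = 0 ∧
          lhRes (lhWeight e wva wbv wab R d γ) γ x (LNode.auxB ε) = 0)) := by

  classical
  set w := lhWeight e wva wbv wab R d γ with hwdef
  set ℓ : LNode V E → ℝ :=
    Sum.elim (fun _ => 0) (Sum.elim (fun _ => 0)
      (Sum.elim (fun v => κ * γ * d v) (fun _ => 0))) with hldef
  have hγ' : γ ≠ 0 := ne_of_gt hγ
  have hwnn : ∀ i j, 0 ≤ w i j := by
    intro i j
    show 0 ≤ lhWeight e wva wbv wab R d γ i j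
    rcases i with u | u | v | ε | ε <;> rcases j with u' | u' | v' | ε' | ε' <;>
      simp only [lhWeight] <;> try norm_num
    all_goals split_ifs with h
    all_goals first
      | exact (mul_pos hγ (hd _)).le
      | exact (hwva _ _ h).le
      | exact (hwbv _ _ h).le
      | exact (hwab _).le
      | norm_num
  have hFeq : ∀ z : LNode V E → ℝ, lhF w d κ γ z = gF w ℓ z := by
    intro z
    unfold lhF gF
    congr 1
    simp only [hldef, Fintype.sum_sum_type, Sum.elim_inl, Sum.elim_inr, zero_mul,
      Finset.sum_const_zero, add_zero, zero_add, LNode.orig, Finset.mul_sum]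
    exact Finset.sum_congr rfl fun v _ => by ring
  have hgD : ∀ u, gD w ℓ x u = ℓ u - γ * lhRes w γ x u := by
    intro u
    unfold gD lhRes
    rw [← mul_assoc, mul_one_div_cancel hγ', one_mul]
    ring
  have hres0 : ∀ u, x u = 0 → 0 ≤ lhRes w γ x u := by
    intro u hu
    unfold lhRes
    apply mul_nonneg (by positivity)
    have hout : ∀ j, max (x u - x j) 0 = 0 := fun j =>
      max_eq_right (by have := hx0 j; linarith)
    simp only [hout, mul_zero, Finset.sum_const_zero, sub_zero]
    exact Finset.sum_nonneg fun j _ => mul_nonneg (hwnn j u) (le_max_right _ _)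
  have hiff := g_min_kkt w ℓ hwnn LNode.s LNode.t x hxs hxt hx0
  simp only [hFeq]
  rw [hiff]
  constructor
  · intro hk
    refine ⟨fun v => ?_, fun v => ?_, fun ε => ⟨?_, ?_⟩⟩
    · have h := (hk (LNode.orig v) (by simp [LNode.orig, LNode.s])
        (by simp [LNode.orig, LNode.t])).1
      rw [hgD] at h
      have hl : ℓ (LNode.orig v) = κ * γ * d v := rfl
      rw [hl] at h
      nlinarith [h, hγ]
    · have h := (hk (LNode.orig v) (by simp [LNode.orig, LNode.s])
        (by simp [LNode.orig, LNode.t])).2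
      rw [hgD] at h
      have hl : ℓ (LNode.orig v) = κ * γ * d v := rfl
      rw [hl] at h
      have h2 : γ * ((κ * d v - lhRes w γ x (LNode.orig v)) * x (LNode.orig v)) = 0 := by
        linear_combination h
      rcases mul_eq_zero.mp h2 with h3 | h3
      · exact absurd h3 hγ'
      · exact h3
    · have h := hk (LNode.auxA ε) (by simp [LNode.auxA, LNode.s])
        (by simp [LNode.auxA, LNode.t])
      rw [hgD] at h
      have hl : ℓ (LNode.auxA ε) = 0 := rfl
      rw [hl] at h
      obtain ⟨h1, h2⟩ := h
      have hgle : lhRes w γ x (LNode.auxA ε) ≤ 0 := by nlinarith [h1, hγ]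
      rcases eq_or_lt_of_le (hx0 (LNode.auxA ε)) with hz | hz
      · exact le_antisymm hgle (hres0 _ hz.symm)
      · have h3 : γ * (lhRes w γ x (LNode.auxA ε) * x (LNode.auxA ε)) = 0 := by
          linear_combination -h2
        rcases mul_eq_zero.mp h3 with h4 | h4
        · exact absurd h4 hγ'
        · rcases mul_eq_zero.mp h4 with h5 | h5
          · exact h5
          · exact absurd h5 hz.ne'
    · have h := hk (LNode.auxB ε) (by simp [LNode.auxB, LNode.s])
        (by simp [LNode.auxB, LNode.t])
      rw [hgD] at h
      have hl : ℓ (LNode.auxB ε) = 0 := rfl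
      rw [hl] at h
      obtain ⟨h1, h2⟩ := h
      have hgle : lhRes w γ x (LNode.auxB ε) ≤ 0 := by nlinarith [h1, hγ]
      rcases eq_or_lt_of_le (hx0 (LNode.auxB ε)) with hz | hz
      · exact le_antisymm hgle (hres0 _ hz.symm)
      · have h3 : γ * (lhRes w γ x (LNode.auxB ε) * x (LNode.auxB ε)) = 0 := by
          linear_combination -h2
        rcases mul_eq_zero.mp h3 with h4 | h4
        · exact absurd h4 hγ'
        · rcases mul_eq_zero.mp h4 with h5 | h5
          · exact h5
          · exact absurd h5 hz.ne'
  · rintro ⟨h1, h2, h3⟩ u hus hut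
    rw [hgD u]
    obtain (u0 | u0 | v | ε | ε) := u
    · cases u0; exact absurd rfl hus
    · cases u0; exact absurd rfl hut
    · constructor
      · show 0 ≤ ℓ (LNode.orig v) - γ * lhRes w γ x (LNode.orig v)
        have hl : ℓ (LNode.orig v) = κ * γ * d v := rfl
        rw [hl]
        nlinarith [h1 v, hγ]
      · show (ℓ (LNode.orig v) - γ * lhRes w γ x (LNode.orig v)) * x (LNode.orig v) = 0
        have hl : ℓ (LNode.orig v) = κ * γ * d v := rfl
        rw [hl]
        linear_combination γ * (h2 v)
    · constructor
      · show 0 ≤ ℓ (LNode.auxA ε) - γ * lhRes w γ x (LNode.auxA ε)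
        rw [(h3 ε).1]
        norm_num [show ℓ (LNode.auxA ε) = 0 from rfl]
      · show (ℓ (LNode.auxA ε) - γ * lhRes w γ x (LNode.auxA ε)) * x (LNode.auxA ε) = 0
        rw [(h3 ε).1]
        norm_num [show ℓ (LNode.auxA ε) = 0 from rfl]
    · constructor
      · show 0 ≤ ℓ (LNode.auxB ε) - γ * lhRes w γ x (LNode.auxB ε)
        rw [(h3 ε).2]
        norm_num [show ℓ (LNode.auxB ε) = 0 from rfl]
      · show (ℓ (LNode.auxB ε) - γ * lhRes w γ x (LNode.auxB ε)) * x (LNode.auxB ε) = 0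
        rw [(h3 ε).2]
        norm_num [show ℓ (LNode.auxB ε) = 0 from rfl]
end

section
/- Consider a finite directed graph on node set N = {s} ∪ V ∪ A ∪ {t}, where A consists of pairs of auxiliary nodes (a_e, b_e) indexed by a finite collection 𝓔 of hyperedges e ⊆ V: for each e the graph has edges (v, a_e) and (b_e, v) with positive weights for every v ∈ e, and an edge (a_e, b_e) with positive weight; in addition, for a fixed seed set R ⊆ V and degrees d_i > 0 (i ∈ V) and γ > 0, there is an edge (s, r) of weight γ d_r for each r ∈ R and an edge (v, t) of weight γ d_v for each v ∈ V∖R; there are no other edges. Fix κ > 0 and 1 < p ≤ 2, let ℓ(t) = t^p/p, and consider minimizing F(x) = Σ_{(i,j) edge} w_{ij} ℓ((x_i − x_j)₊) + κγ Σ_{i∈V} d_i x_i over all x : N → ℝ with x_s = 1, x_t = 0 and x ≥ 0, where (t)₊ = max{t,0}. For any node u ≠ s,t define g_u(x) = (1/γ)[ Σ_{(j,u) edge} w_{ju}((x_j − x_u)₊)^{p−1} − Σ_{(u,j) edge} w_{uj}((x_u − x_j)₊)^{p−1} ]. Then a feasible point x* is a global minimizer of F if and only if: (i) g_i(x*) ≤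 κ d_i for every i ∈ V; (ii) (κ d_i − g_i(x*)) x*_i = 0 for every i ∈ V; and (iii) g_u(x*) = 0 for every auxiliary node u ∈ A. -/
open Finset

/-- The p-norm diffusion objective
`F(x) = Σ_{(i,j)} w_{ij} ℓ((x_i − x_j)₊) + κγ Σ_{i∈V} d_i x_i` with `ℓ(t) = t^p/p`. -/
noncomputable def lhFp {V E : Type} [Fintype V] [Fintype E]
    (w : LNode V E → LNode V E → ℝ) (d : V → ℝ) (κ γ p : ℝ) (x : LNode V E → ℝ) : ℝ :=
  ∑ i : LNode V E, ∑ j : LNode V E, w i j * ((max (x i - x j) 0) ^ p / p)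
    + κ * γ * ∑ v : V, d v * x (LNode.orig v)

/-- The p-norm residual `g_u(x)` of a node `u`. -/
noncomputable def lhResp {V E : Type} [Fintype V] [Fintype E]
    (w : LNode V E → LNode V E → ℝ) (γ p : ℝ) (x : LNode V E → ℝ) (u : LNode V E) : ℝ :=
  (1 / γ) * (∑ j : LNode V E, w j u * (max (x j - x u) 0) ^ (p - 1)
    - ∑ j : LNode V E, w u j * (max (x u - x j) 0) ^ (p - 1))

section LHAux

open Filter Topology

noncomputable def lphi (p t : ℝ) : ℝ := max t 0 ^ (p - 1)
noncomputable def lpsi (p t : ℝ) : ℝ := max t 0 ^ p / p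

lemma lphi_nonneg (p t : ℝ) : 0 ≤ lphi p t := Real.rpow_nonneg (le_max_right _ _) _

lemma lpsi_nonneg {p : ℝ} (hp : 0 < p) (t : ℝ) : 0 ≤ lpsi p t :=
  div_nonneg (Real.rpow_nonneg (le_max_right _ _) _) hp.le

lemma lphi_of_nonpos {p : ℝ} (hp : 1 < p) {t : ℝ} (ht : t ≤ 0) : lphi p t = 0 := by
  rw [lphi, max_eq_right ht, Real.zero_rpow (by linarith)]

lemma lpsi_of_nonpos {p : ℝ} (hp : 1 < p) {t : ℝ} (ht : t ≤ 0) : lpsi p t = 0 := by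
  rw [lpsi, max_eq_right ht, Real.zero_rpow (by linarith), zero_div]

lemma lphi_continuous {p : ℝ} (hp : 1 < p) : Continuous (lphi p) := by
  rw [continuous_iff_continuousAt]
  intro t
  show ContinuousAt ((fun s : ℝ => s ^ (p - 1)) ∘ (fun s : ℝ => max s 0)) t
  exact ContinuousAt.comp
    (Real.continuousAt_rpow_const (max t 0) (p - 1) (Or.inr (by linarith)))
    ((continuous_id.max continuous_const).continuousAt)

lemma lpsi_grad_ineq {p : ℝ} (hp : 1 < p) (a b : ℝ) :
    lpsi p a + lphi p a * (b - a) ≤ lpsi p b := by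
  have hp0 : (0:ℝ) < p := by linarith
  rcases le_or_gt a 0 with ha | ha
  · rw [lphi_of_nonpos hp ha, lpsi_of_nonpos hp ha]
    simpa using lpsi_nonneg hp0 b
  · have hma : max a 0 = a := max_eq_left ha.le
    have hap : a ^ (p - 1) * a = a ^ p := by
      rw [← Real.rpow_add_one ha.ne' (p - 1)]
      ring_nf
    have h1 : (0:ℝ) < a ^ (p - 1) := Real.rpow_pos_of_pos ha _
    have h2 : (0:ℝ) < a ^ p := Real.rpow_pos_of_pos ha _
    rcases le_or_gt b 0 with hb | hb
    · rw [lpsi_of_nonpos hp hb, lpsi, lphi, hma]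
      have hb' : a ^ (p - 1) * b ≤ 0 :=
        mul_nonpos_of_nonneg_of_nonpos h1.le hb
      have hps : a ^ p / p ≤ a ^ p := div_le_self h2.le hp.le
      nlinarith
    · rw [lpsi, lpsi, lphi, hma, max_eq_left hb.le]
      have key := one_add_mul_self_le_rpow_one_add
        (s := b / a - 1) (by have := div_pos hb ha; linarith) hp.le
      have h2' : (1 + (b / a - 1)) = b / a := by ring
      rw [h2'] at key
      have h3 : (b / a) ^ p = b ^ p / a ^ p := Real.div_rpow hb.le ha.le p
      have h5 : a ^ p * (1 + p * (b / a - 1)) ≤ a ^ p * ((b / a) ^ p) :=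
        mul_le_mul_of_nonneg_left key h2.le
      rw [h3] at h5
      have h6 : a ^ p * (b ^ p / a ^ p) = b ^ p := by field_simp
      have hba : a ^ p * (b / a) = a ^ (p - 1) * b := by
        rw [← hap]; field_simp
      have h7 : a ^ p * (1 + p * (b / a - 1))
          = a ^ p + p * (a ^ (p - 1) * b) - p * a ^ p := by
        have : a ^ p * (b / a) = a ^ (p - 1) * b := hba
        linear_combination p * this
      rw [le_div_iff₀ hp0, add_mul, div_mul_cancel₀ _ hp0.ne']
      have hap2 : p * (a ^ (p - 1) * a) = p * a ^ p := by rw [hap]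
      nlinarith [h5, h6, h7, hap2]

section Abstract

variable {N : Type} [Fintype N] [DecidableEq N]

noncomputable def lFobj (w : N → N → ℝ) (c : N → ℝ) (p : ℝ) (x : N → ℝ) : ℝ :=
  ∑ i, ∑ j, w i j * lpsi p (x i - x j) + ∑ i, c i * x i

noncomputable def lDres (w : N → N → ℝ) (c : N → ℝ) (p : ℝ) (x : N → ℝ) (u : N) : ℝ :=
  (∑ j, w u j * lphi p (x u - x j)) - (∑ j, w j u * lphi p (x j - x u)) + c u

lemma lsum_rearrange (w : N → N → ℝ) (p : ℝ) (x z : N → ℝ) :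
    ∑ u, ((∑ j, w u j * lphi p (x u - x j)) - (∑ j, w j u * lphi p (x j - x u))) * z u
      = ∑ i, ∑ j, w i j * lphi p (x i - x j) * (z i - z j) := by
  have h1 : ∑ i, ∑ j, w i j * lphi p (x i - x j) * (z i - z j)
      = (∑ i, ∑ j, w i j * lphi p (x i - x j) * z i)
        - ∑ i, ∑ j, w i j * lphi p (x i - x j) * z j := by
    simp_rw [mul_sub, Finset.sum_sub_distrib]
  rw [h1]
  have h2 : ∑ u, ((∑ j, w u j * lphi p (x u - x j))
        - (∑ j, w j u * lphi p (x j - x u))) * z u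
      = (∑ u, (∑ j, w u j * lphi p (x u - x j)) * z u)
        - ∑ u, (∑ j, w j u * lphi p (x j - x u)) * z u := by
    simp_rw [sub_mul, Finset.sum_sub_distrib]
  rw [h2]
  have hA : ∑ u, (∑ j, w u j * lphi p (x u - x j)) * z u
      = ∑ i, ∑ j, w i j * lphi p (x i - x j) * z i := by
    simp_rw [Finset.sum_mul]
  have hB : ∑ u, (∑ j, w j u * lphi p (x j - x u)) * z u
      = ∑ i, ∑ j, w i j * lphi p (x i - x j) * z j := by
    rw [Finset.sum_comm]
    simp_rw [Finset.sum_mul]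
  rw [hA, hB]

lemma lFobj_grad (w : N → N → ℝ) (c : N → ℝ) {p : ℝ} (hp : 1 < p)
    (hw : ∀ i j, 0 ≤ w i j) (x y : N → ℝ) :
    lFobj w c p x + ∑ u, lDres w c p x u * (y u - x u) ≤ lFobj w c p y := by
  have hD : ∑ u, lDres w c p x u * (y u - x u)
      = (∑ i, ∑ j, w i j * lphi p (x i - x j) * ((y i - x i) - (y j - x j)))
        + ∑ u, c u * (y u - x u) := by
    simp only [lDres, add_mul]
    rw [Finset.sum_add_distrib, lsum_rearrange w p x (fun u => y u - x u)]
  rw [lFobj, lFobj, hD]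
  have hc : ∑ i, c i * x i + ∑ u, c u * (y u - x u) = ∑ i, c i * y i := by
    rw [← Finset.sum_add_distrib]
    exact Finset.sum_congr rfl fun u _ => by ring
  have hmain : ∑ i, ∑ j, w i j * lpsi p (x i - x j)
      + ∑ i, ∑ j, w i j * lphi p (x i - x j) * ((y i - x i) - (y j - x j))
      ≤ ∑ i, ∑ j, w i j * lpsi p (y i - y j) := by
    rw [← Finset.sum_add_distrib]
    apply Finset.sum_le_sum
    intro i _
    rw [← Finset.sum_add_distrib]
    apply Finset.sum_le_sum
    intro j _
    have h := lpsi_grad_ineq hp (x i - x j) (y i - y j)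
    have h2 := mul_le_mul_of_nonneg_left h (hw i j)
    nlinarith [h2]
  linarith

lemma lkkt_abstract (w : N → N → ℝ) (c : N → ℝ) {p : ℝ} (hp : 1 < p)
    (hw : ∀ i j, 0 ≤ w i j) (S : Finset N) (x : N → ℝ) (hx0 : ∀ u, 0 ≤ x u) :
    (∀ y : N → ℝ, (∀ v ∈ S, y v = x v) → (∀ u, 0 ≤ y u) →
        lFobj w c p x ≤ lFobj w c p y) ↔
      ∀ u ∉ S, 0 ≤ lDres w c p x u ∧ lDres w c p x u * x u = 0 := by
  constructor
  · intro hmin u hu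
    set G : ℝ → ℝ := fun δ => lDres w c p (Function.update x u (x u + δ)) u with hG
    have hGcont : Continuous G := by
      have hGeq : G = fun δ : ℝ =>
          (∑ j, w u j * lphi p ((x u + δ) - (if j = u then x u + δ else x j)))
          - (∑ j, w j u * lphi p ((if j = u then x u + δ else x j) - (x u + δ)))
          + c u := by
        funext δ
        simp [hG, lDres, Function.update_apply]
      rw [hGeq]
      apply Continuous.add _ continuous_const
      apply Continuous.sub
      · apply continuous_finset_sum
        intro j _
        apply Continuous.mul continuous_const
        apply (lphi_continuous hp).comp
        by_cases hj : j = u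
        · simp only [if_pos hj]; fun_prop
        · simp only [if_neg hj]; fun_prop
      · apply continuous_finset_sum
        intro j _
        apply Continuous.mul continuous_const
        apply (lphi_continuous hp).comp
        by_cases hj : j = u
        · simp only [if_pos hj]; fun_prop
        · simp only [if_neg hj]; fun_prop
    have key : ∀ δ : ℝ, 0 ≤ x u + δ → 0 ≤ δ * G δ := by
      intro δ hδ
      set y := Function.update x u (x u + δ) with hy
      have hyS : ∀ v ∈ S, y v = x v := by
        intro v hv
        refine Function.update_of_ne ?_ _ _
        rintro rfl
        exact hu hv
      have hy0 : ∀ v, 0 ≤ y v := by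
        intro v
        rw [hy, Function.update_apply]
        split_ifs
        exacts [hδ, hx0 v]
      have h1 := hmin y hyS hy0
      have h2 := lFobj_grad w c hp hw y x
      have h3 : ∑ v, lDres w c p y v * (x v - y v) ≤ 0 := by linarith
      have h4 : ∑ v, lDres w c p y v * (x v - y v) = -(δ * G δ) := by
        rw [Finset.sum_eq_single u]
        · rw [hG]
          simp only [hy, Function.update_self]
          ring
        · intro v _ hv
          rw [hy, Function.update_of_ne hv]
          ring
        · intro h
          exact absurd (Finset.mem_univ u) h
      linarith
    have hG0 : G 0 = lDres w c p x u := by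
      rw [hG]
      simp
    have hGpos : 0 ≤ G 0 := by
      have ht : Tendsto G (nhdsWithin 0 (Set.Ioi 0)) (nhds (G 0)) :=
        (hGcont.continuousAt).tendsto.mono_left nhdsWithin_le_nhds
      refine ge_of_tendsto ht ?_
      filter_upwards [self_mem_nhdsWithin] with δ hδ
      have hδ' : (0:ℝ) < δ := hδ
      have h1 : 0 ≤ δ * G δ := key δ (by linarith [hx0 u])
      exact (mul_nonneg_iff_of_pos_left hδ').mp h1
    refine ⟨by rw [← hG0]; exact hGpos, ?_⟩
    rcases eq_or_lt_of_le (hx0 u) with h0 | h0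
    · rw [← h0, mul_zero]
    · have hGneg : G 0 ≤ 0 := by
        have ht : Tendsto G (nhdsWithin 0 (Set.Iio 0)) (nhds (G 0)) :=
          (hGcont.continuousAt).tendsto.mono_left nhdsWithin_le_nhds
        refine le_of_tendsto ht ?_
        have hmem : Set.Ioo (-(x u)) 0 ∈ nhdsWithin (0:ℝ) (Set.Iio 0) :=
          Ioo_mem_nhdsLT_of_mem ⟨by linarith, le_rfl⟩
        filter_upwards [hmem] with δ hδ
        have h1 : 0 ≤ x u + δ := by linarith [hδ.1]
        have h2 := key δ h1
        by_contra hpos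
        push_neg at hpos
        have := mul_neg_of_neg_of_pos hδ.2 hpos
        linarith
      have hz : G 0 = 0 := le_antisymm hGneg hGpos
      rw [hG0] at hz
      rw [hz, zero_mul]
  · intro hkkt y hyS hy0
    have h := lFobj_grad w c hp hw x y
    have hsum : 0 ≤ ∑ u, lDres w c p x u * (y u - x u) := by
      apply Finset.sum_nonneg
      intro u _
      by_cases hu : u ∈ S
      · rw [hyS u hu]; simp
      · obtain ⟨h1, h2⟩ := hkkt u hu
        have heq : lDres w c p x u * (y u - x u) = lDres w c p x u * y u := by
          rw [mul_sub, h2, sub_zero]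
        rw [heq]
        exact mul_nonneg h1 (hy0 u)
    linarith

end Abstract

end LHAux

/-- KKT characterization of global minimizers of the p-norm localized hypergraph
diffusion objective (`1 < p ≤ 2`) on the localized directed cut graph: a feasible `x*`
(`x*_s = 1`, `x*_t = 0`, `x* ≥ 0`) is a global minimizer iff (i) `g_i ≤ κ d_i` on
original nodes, (ii) `(κ d_i − g_i) x*_i = 0` on original nodes, and (iii) `g_u = 0`
on all auxiliary nodes. -/
theorem lh_pnorm_kkt {V E : Type} [Fintype V] [Fintype E] [DecidableEq V] [DecidableEq E]
    (e : E → Finset V) (wva : V → E → ℝ) (wbv : E → V → ℝ) (wab : E → ℝ)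
    (R : Finset V) (d : V → ℝ) (γ κ p : ℝ)
    (hwva : ∀ ε, ∀ v ∈ e ε, 0 < wva v ε) (hwbv : ∀ ε, ∀ v ∈ e ε, 0 < wbv ε v)
    (hwab : ∀ ε, 0 < wab ε) (hd : ∀ v, 0 < d v) (hγ : 0 < γ) (hκ : 0 < κ)
    (hp1 : 1 < p) (hp2 : p ≤ 2)
    (x : LNode V E → ℝ)
    (hxs : x LNode.s = 1) (hxt : x LNode.t = 0) (hx0 : ∀ u, 0 ≤ x u) :
    (∀ y : LNode V E → ℝ, y LNode.s = 1 → y LNode.t = 0 → (∀ u, 0 ≤ y u) →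
        lhFp (lhWeight e wva wbv wab R d γ) d κ γ p x ≤
          lhFp (lhWeight e wva wbv wab R d γ) d κ γ p y) ↔
      ((∀ v : V, lhResp (lhWeight e wva wbv wab R d γ) γ p x (LNode.orig v) ≤ κ * d v) ∧
        (∀ v : V,
          (κ * d v - lhResp (lhWeight e wva wbv wab R d γ) γ p x (LNode.orig v)) *
            x (LNode.orig v) = 0) ∧
        (∀ ε : E, lhResp (lhWeight e wva wbv wab R d γ) γ p x (LNode.auxA ε) = 0 ∧
          lhResp (lhWeight e wva wbv wab R d γ) γ p x (LNode.auxB ε) = 0)) := by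
  classical
  set w := lhWeight e wva wbv wab R d γ with hw_def
  set c : LNode V E → ℝ := Sum.elim (fun _ => 0) (Sum.elim (fun _ => 0)
    (Sum.elim (fun v => κ * γ * d v) (Sum.elim (fun _ => 0) (fun _ => 0)))) with hc_def
  have hγ' : γ ≠ 0 := hγ.ne'
  have hwnn : ∀ i j, 0 ≤ w i j := by
    rintro (i | i | i | i | i) (j | j | j | j | j) <;>
      simp only [hw_def, lhWeight] <;>
      (try split_ifs) <;>
      first
        | exact le_rfl
        | exact mul_nonneg hγ.le (hd _).le
        | exact (hwva _ _ (by assumption)).le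
        | exact (hwbv _ _ (by assumption)).le
        | exact (hwab _).le
  have hcs : c LNode.s = 0 := rfl
  have hct : c LNode.t = 0 := rfl
  have hco : ∀ v : V, c (LNode.orig v) = κ * γ * d v := fun v => rfl
  have hca : ∀ ε : E, c (LNode.auxA ε) = 0 := fun ε => rfl
  have hcb : ∀ ε : E, c (LNode.auxB ε) = 0 := fun ε => rfl
  have hFeq : ∀ z : LNode V E → ℝ, lhFp w d κ γ p z = lFobj w c p z := by
    intro z
    rw [lhFp, lFobj]
    congr 1
    have hcsum : ∑ u : LNode V E, c u * z u
        = ∑ v : V, κ * γ * (d v * z (LNode.orig v)) := by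
      rw [Fintype.sum_sum_type, Fintype.sum_sum_type, Fintype.sum_sum_type,
        Fintype.sum_sum_type]
      simp [hc_def, LNode.orig, mul_assoc]
    rw [hcsum, Finset.mul_sum]
  have hDres : ∀ u, lDres w c p x u = c u - γ * lhResp w γ p x u := by
    intro u
    simp only [lDres, lhResp, lphi]
    field_simp
    ring
  have hResp_nonneg : ∀ u, x u = 0 → 0 ≤ lhResp w γ p x u := by
    intro u hu
    rw [lhResp, hu]
    have hout : ∑ j : LNode V E, w u j * max (0 - x j) 0 ^ (p - 1) = 0 :=
      Finset.sum_eq_zero fun j _ => by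
        rw [max_eq_right (by linarith [hx0 j]), Real.zero_rpow (by linarith), mul_zero]
    rw [hout, sub_zero]
    apply mul_nonneg (by positivity)
    exact Finset.sum_nonneg fun j _ =>
      mul_nonneg (hwnn j u) (Real.rpow_nonneg (le_max_right _ _) _)
  set S : Finset (LNode V E) := {LNode.s, LNode.t} with hS_def
  have hsS : LNode.s (V := V) (E := E) ∈ S := Finset.mem_insert_self _ _
  have htS : LNode.t (V := V) (E := E) ∈ S :=
    Finset.mem_insert_of_mem (Finset.mem_singleton_self _)
  have hoS : ∀ v : V, LNode.orig (E := E) v ∉ S := by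
    intro v
    simp [hS_def, LNode.s, LNode.t, LNode.orig]
  have haS : ∀ ε : E, LNode.auxA (V := V) ε ∉ S := by
    intro ε
    simp [hS_def, LNode.s, LNode.t, LNode.auxA]
  have hbS : ∀ ε : E, LNode.auxB (V := V) ε ∉ S := by
    intro ε
    simp [hS_def, LNode.s, LNode.t, LNode.auxB]
  have habs := lkkt_abstract w c hp1 hwnn S x hx0
  have hL : (∀ y : LNode V E → ℝ, y LNode.s = 1 → y LNode.t = 0 → (∀ u, 0 ≤ y u) →
      lhFp w d κ γ p x ≤ lhFp w d κ γ p y) ↔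
      (∀ y : LNode V E → ℝ, (∀ v ∈ S, y v = x v) → (∀ u, 0 ≤ y u) →
        lFobj w c p x ≤ lFobj w c p y) := by
    constructor
    · intro h y hS hy0
      rw [← hFeq, ← hFeq]
      refine h y ?_ ?_ hy0
      · rw [hS _ hsS, hxs]
      · rw [hS _ htS, hxt]
    · intro h y hys hyt hy0
      rw [hFeq, hFeq]
      refine h y ?_ hy0
      intro v hv
      rcases Finset.mem_insert.mp hv with rfl | hv
      · rw [hys, hxs]
      · rw [Finset.mem_singleton.mp hv, hyt, hxt]
  rw [hL, habs]
  constructor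
  · intro h
    have haux : ∀ u, c u = 0 → u ∉ S → lhResp w γ p x u = 0 := by
      intro u hcu huS
      obtain ⟨h1, h2⟩ := h u huS
      rw [hDres u, hcu, zero_sub] at h1 h2
      have hg_le : lhResp w γ p x u ≤ 0 := by
        by_contra hpos
        push_neg at hpos
        have := mul_pos hγ hpos
        linarith
      rcases eq_or_lt_of_le (hx0 u) with h0 | h0
      · exact le_antisymm hg_le (hResp_nonneg u h0.symm)
      · have hz : -(γ * lhResp w γ p x u) = 0 := by
          rcases mul_eq_zero.mp h2 with hh | hh
          · exact hh
          · exact absurd hh h0.ne'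
        have hz2 : γ * lhResp w γ p x u = 0 := by linarith
        exact (mul_eq_zero.mp hz2).resolve_left hγ'
    refine ⟨fun v => ?_, fun v => ?_, fun ε =>
      ⟨haux _ (hca ε) (haS ε), haux _ (hcb ε) (hbS ε)⟩⟩
    · have h1 := (h (LNode.orig v) (hoS v)).1
      rw [hDres, hco] at h1
      have h2 : γ * lhResp w γ p x (LNode.orig v) ≤ γ * (κ * d v) := by nlinarith
      exact le_of_mul_le_mul_left h2 hγ
    · have h2 := (h (LNode.orig v) (hoS v)).2
      rw [hDres, hco] at h2
      have h3 : γ * ((κ * d v - lhResp w γ p x (LNode.orig v)) * x (LNode.orig v)) = 0 := by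
        linear_combination h2
      exact (mul_eq_zero.mp h3).resolve_left hγ'
  · rintro ⟨h1, h2, h3⟩ u huS
    rcases u with u | u | v | ε | ε
    · cases u
      exact absurd hsS huS
    · cases u
      exact absurd htS huS
    · rw [show (Sum.inr (Sum.inr (Sum.inl v)) : LNode V E) = LNode.orig v from rfl]
      rw [hDres, hco]
      constructor
      · have := mul_le_mul_of_nonneg_left (h1 v) hγ.le
        nlinarith
      · linear_combination γ * h2 v
    · rw [show (Sum.inr (Sum.inr (Sum.inr (Sum.inl ε))) : LNode V E) = LNode.auxA ε from rfl]
      rw [hDres, hca, (h3 ε).1]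
      norm_num
    · rw [show (Sum.inr (Sum.inr (Sum.inr (Sum.inr ε))) : LNode V E) = LNode.auxB ε from rfl]
      rw [hDres, hcb, (h3 ε).2]
      norm_num
end

section
/- Let e be a nonempty finite index set, and let w_{ab} > 0, w_{ia} > 0 and w_{bi} > 0 for each i ∈ e be positive weights. Let x_i (i ∈ e), x_a, x_b be real numbers, and write (t)₊ = max{t,0}. If the two auxiliary residuals vanish, i.e. −w_{ab}(x_a − x_b)₊ + Σ_{i∈e} w_{ia}(x_i − x_a)₊ = 0 and w_{ab}(x_a − x_b)₊ − Σ_{i∈e} w_{bi}(x_b − x_i)₊ = 0, then x_a ≥ x_b. -/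
open Finset

/-- If the residuals of both auxiliary nodes `a` and `b` of a hyperedge gadget vanish,
then `x_a ≥ x_b`. -/
theorem aux_node_order {ι : Type*} (e : Finset ι) (he : e.Nonempty)
    (wab : ℝ) (wia wbi : ι → ℝ) (hwab : 0 < wab)
    (hwia : ∀ i ∈ e, 0 < wia i) (hwbi : ∀ i ∈ e, 0 < wbi i)
    (x : ι → ℝ) (xa xb : ℝ)
    (hra : -wab * max (xa - xb) 0 + ∑ i ∈ e, wia i * max (x i - xa) 0 = 0)
    (hrb : wab * max (xa - xb) 0 - ∑ i ∈ e, wbi i * max (xb - x i) 0 = 0) :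
    xb ≤ xa := by
  by_contra h
  push_neg at h
  have hm : max (xa - xb) 0 = 0 := by
    apply max_eq_right; linarith
  rw [hm, mul_zero] at hra hrb
  simp only [neg_zero, zero_add] at hra
  simp only [zero_sub, neg_eq_zero] at hrb
  have hsum1 : ∀ i ∈ e, wia i * max (x i - xa) 0 = 0 := by
    intro i hi
    have := (Finset.sum_eq_zero_iff_of_nonneg (fun j hj =>
      mul_nonneg (hwia j hj).le (le_max_right _ _))).mp hra i hi
    exact this
  have hsum2 : ∀ i ∈ e, wbi i * max (xb - x i) 0 = 0 := by
    intro i hi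
    exact (Finset.sum_eq_zero_iff_of_nonneg (fun j hj =>
      mul_nonneg (hwbi j hj).le (le_max_right _ _))).mp hrb i hi
  obtain ⟨i, hi⟩ := he
  have h1 : max (x i - xa) 0 = 0 :=
    (mul_eq_zero.mp (hsum1 i hi)).resolve_left (hwia i hi).ne'
  have h2 : max (xb - x i) 0 = 0 :=
    (mul_eq_zero.mp (hsum2 i hi)).resolve_left (hwbi i hi).ne'
  have hle1 : x i - xa ≤ 0 := by
    by_contra hc; push_neg at hc
    rw [max_eq_left hc.le] at h1; linarith
  have hle2 : xb - x i ≤ 0 := by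
    by_contra hc; push_neg at hc
    rw [max_eq_left hc.le] at h2; linarith
  linarith
end

section
/- Let V be a finite vertex set, R ⊆ V a seed set, d_i > 0 degrees for i ∈ V, γ > 0, and let 𝓔 be a finite collection of nonempty hyperedges e ⊆ V, each carrying positive weights w_{i a_e}, w_{b_e i} (i ∈ e) and w_{a_e b_e} and auxiliary values x_{a_e}, x_{b_e} ∈ ℝ. Let x_i ∈ ℝ for i ∈ V, and write (t)₊ = max{t,0}. Define residuals r_i = (1/γ) Σ_{e: i∈e} w_{b_e i}(x_{b_e} − x_i)₊ − (1/γ) Σ_{e: i∈e} w_{i a_e}(x_i − x_{a_e})₊ + d_i(𝟙[i∈R] − x_i) for i ∈ V, r_{a_e} = −(1/γ) w_{a_e b_e}(x_{a_e} − x_{b_e})₊ + (1/γ) Σ_{v∈e} w_{v a_e}(x_v − x_{a_e})₊, and r_{b_e} = (1/γ) w_{a_e b_e}(x_{a_e} − x_{b_e})₊ − (1/γ) Σ_{v∈e} w_{b_e v}(x_{b_e} − x_v)₊. If x_i ≥ 0 for all i ∈ V, r_i ≥ 0 for all i ∈ V, and r_{a_e} = r_{b_e} = 0 for every e ∈ 𝓔,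 then 0 ≤ x_u ≤ 1 for every node u ∈ V ∪ {a_e, b_e : e ∈ 𝓔}. -/
open Finset

/-- Invariant of the LHQD algorithm: if all original values are nonnegative, all
residuals of original nodes are nonnegative, and both auxiliary residuals of every
hyperedge gadget vanish, then every value (original and auxiliary) lies in `[0,1]`. -/
theorem values_in_unit_interval {V E : Type*} [Fintype V] [Fintype E] [DecidableEq V]
    (R : Finset V) (d : V → ℝ) (hd : ∀ v, 0 < d v) (γ : ℝ) (hγ : 0 < γ)
    (e : E → Finset V) (he : ∀ ε, (e ε).Nonempty)
    (wia : V → E → ℝ) (wbi : E → V → ℝ) (wab : E → ℝ)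
    (hwia : ∀ ε, ∀ v ∈ e ε, 0 < wia v ε) (hwbi : ∀ ε, ∀ v ∈ e ε, 0 < wbi ε v)
    (hwab : ∀ ε, 0 < wab ε)
    (x : V → ℝ) (xa xb : E → ℝ)
    (hx0 : ∀ i, 0 ≤ x i)
    (hr : ∀ i : V,
      0 ≤ (1 / γ) * ∑ ε ∈ univ.filter (fun ε => i ∈ e ε), wbi ε i * max (xb ε - x i) 0
          - (1 / γ) * ∑ ε ∈ univ.filter (fun ε => i ∈ e ε), wia i ε * max (x i - xa ε) 0
          + d i * ((if i ∈ R then 1 else 0) - x i))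
    (hra : ∀ ε : E,
      -(1 / γ) * (wab ε * max (xa ε - xb ε) 0)
          + (1 / γ) * ∑ v ∈ e ε, wia v ε * max (x v - xa ε) 0 = 0)
    (hrb : ∀ ε : E,
      (1 / γ) * (wab ε * max (xa ε - xb ε) 0)
          - (1 / γ) * ∑ v ∈ e ε, wbi ε v * max (xb ε - x v) 0 = 0) :
    (∀ i : V, 0 ≤ x i ∧ x i ≤ 1) ∧
      (∀ ε : E, (0 ≤ xa ε ∧ xa ε ≤ 1) ∧ (0 ≤ xb ε ∧ xb ε ≤ 1)) := by
  have hγ' : (0:ℝ) < 1 / γ := by positivity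
  have hγ'' : (1 / γ : ℝ) ≠ 0 := ne_of_gt hγ'
  -- upper bound of xa by some vertex value on the edge
  have keyA : ∀ ε, ∃ v ∈ e ε, xa ε ≤ x v := by
    intro ε
    by_contra h
    push_neg at h
    have hsum : ∑ v ∈ e ε, wia v ε * max (x v - xa ε) 0 = 0 :=
      Finset.sum_eq_zero fun v hv => by
        rw [max_eq_right (by linarith [h v hv])]; ring
    have hra' := hra ε
    rw [hsum, mul_zero, add_zero] at hra'
    have h1 : wab ε * max (xa ε - xb ε) 0 = 0 := by
      rcases mul_eq_zero.mp hra' with h2 | h2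
      · exact absurd h2 (by simpa using hγ'')
      · exact h2
    have hm : max (xa ε - xb ε) 0 = 0 := by
      rcases mul_eq_zero.mp h1 with h2 | h2
      · exact absurd h2 (ne_of_gt (hwab ε))
      · exact h2
    have hab : xa ε ≤ xb ε := by
      have := le_max_left (xa ε - xb ε) 0
      rw [hm] at this; linarith
    have hrb' := hrb ε
    rw [h1, mul_zero, zero_sub, neg_eq_zero] at hrb'
    have hsum' : ∑ v ∈ e ε, wbi ε v * max (xb ε - x v) 0 = 0 := by
      rcases mul_eq_zero.mp hrb' with h2 | h2
      · exact absurd h2 (by simpa using hγ'')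
      · exact h2
    obtain ⟨v, hv⟩ := he ε
    have hterm : wbi ε v * max (xb ε - x v) 0 = 0 := by
      have hnn : ∀ u ∈ e ε, 0 ≤ wbi ε u * max (xb ε - x u) 0 := fun u hu =>
        mul_nonneg (le_of_lt (hwbi ε u hu)) (le_max_right _ _)
      exact (Finset.sum_eq_zero_iff_of_nonneg hnn).mp hsum' v hv
    have hmv : max (xb ε - x v) 0 = 0 := by
      rcases mul_eq_zero.mp hterm with h2 | h2
      · exact absurd h2 (ne_of_gt (hwbi ε v hv))
      · exact h2
    have : xb ε ≤ x v := by
      have := le_max_left (xb ε - x v) 0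
      rw [hmv] at this; linarith
    linarith [h v hv]
  -- upper bound of xb by some vertex value on the edge
  have keyB : ∀ ε, ∃ v ∈ e ε, xb ε ≤ x v := by
    intro ε
    by_contra h
    push_neg at h
    have hpos : 0 < ∑ v ∈ e ε, wbi ε v * max (xb ε - x v) 0 :=
      Finset.sum_pos (fun v hv => by
        have h1 : 0 < xb ε - x v := by linarith [h v hv]
        have : max (xb ε - x v) 0 = xb ε - x v := max_eq_left (le_of_lt h1)
        rw [this]
        exact mul_pos (hwbi ε v hv) h1) (he ε)
    have hrb' := hrb ε
    have hmpos : 0 < max (xa ε - xb ε) 0 := by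
      by_contra hc
      push_neg at hc
      have hm0 : max (xa ε - xb ε) 0 = 0 := le_antisymm hc (le_max_right _ _)
      rw [hm0, mul_zero, mul_zero, zero_sub, neg_eq_zero] at hrb'
      rcases mul_eq_zero.mp hrb' with h2 | h2
      · exact hγ'' h2
      · linarith
    have hba : xb ε < xa ε := by
      rcases max_cases (xa ε - xb ε) 0 with ⟨h1, h2⟩ | ⟨h1, h2⟩
      · linarith [hmpos, h1 ▸ hmpos]
      · rw [h1] at hmpos; linarith
    obtain ⟨v, hv, hvle⟩ := keyA ε
    linarith [h v hv]
  -- xa is nonnegative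
  have hxa0 : ∀ ε, 0 ≤ xa ε := by
    intro ε
    by_contra h
    push_neg at h
    have hpos : 0 < ∑ v ∈ e ε, wia v ε * max (x v - xa ε) 0 :=
      Finset.sum_pos (fun v hv => by
        have h1 : 0 < x v - xa ε := by linarith [hx0 v]
        rw [max_eq_left (le_of_lt h1)]
        exact mul_pos (hwia ε v hv) h1) (he ε)
    have hra' := hra ε
    have hmpos : 0 < max (xa ε - xb ε) 0 := by
      by_contra hc
      push_neg at hc
      have hm0 : max (xa ε - xb ε) 0 = 0 := le_antisymm hc (le_max_right _ _)
      rw [hm0, mul_zero, mul_zero, zero_add] at hra'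
      rcases mul_eq_zero.mp hra' with h2 | h2
      · exact hγ'' h2
      · linarith
    have hba : xb ε < xa ε := by
      rcases max_cases (xa ε - xb ε) 0 with ⟨h1, h2⟩ | ⟨h1, h2⟩
      · linarith
      · rw [h1] at hmpos; linarith
    have hsum' : ∑ v ∈ e ε, wbi ε v * max (xb ε - x v) 0 = 0 :=
      Finset.sum_eq_zero fun v hv => by
        rw [max_eq_right (by linarith [hx0 v])]; ring
    have hrb' := hrb ε
    rw [hsum', mul_zero, sub_zero] at hrb'
    have h1 : wab ε * max (xa ε - xb ε) 0 = 0 := by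
      rcases mul_eq_zero.mp hrb' with h2 | h2
      · exact absurd h2 hγ''
      · exact h2
    nlinarith [hwab ε]
  -- xb is nonnegative
  have hxb0 : ∀ ε, 0 ≤ xb ε := by
    intro ε
    by_contra h
    push_neg at h
    have hsum' : ∑ v ∈ e ε, wbi ε v * max (xb ε - x v) 0 = 0 :=
      Finset.sum_eq_zero fun v hv => by
        rw [max_eq_right (by linarith [hx0 v])]; ring
    have hrb' := hrb ε
    rw [hsum', mul_zero, sub_zero] at hrb'
    have h1 : wab ε * max (xa ε - xb ε) 0 = 0 := by
      rcases mul_eq_zero.mp hrb' with h2 | h2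
      · exact absurd h2 hγ''
      · exact h2
    have hm : max (xa ε - xb ε) 0 = 0 := by
      rcases mul_eq_zero.mp h1 with h2 | h2
      · exact absurd h2 (ne_of_gt (hwab ε))
      · exact h2
    have : xa ε ≤ xb ε := by
      have := le_max_left (xa ε - xb ε) 0
      rw [hm] at this; linarith
    linarith [hxa0 ε]
  -- every original value is at most 1
  have hle1 : ∀ i : V, x i ≤ 1 := by
    intro i
    have hne : (univ : Finset V).Nonempty := ⟨i, mem_univ i⟩
    obtain ⟨j, -, hj⟩ := Finset.exists_max_image univ x hne
    have hmax : ∀ k : V, x k ≤ x j := fun k => hj k (mem_univ k)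
    suffices hjle : x j ≤ 1 by linarith [hmax i]
    by_contra h1
    push_neg at h1
    have hsum1 : ∑ ε ∈ univ.filter (fun ε => j ∈ e ε), wbi ε j * max (xb ε - x j) 0 = 0 :=
      Finset.sum_eq_zero fun ε hε => by
        obtain ⟨v, hv, hvle⟩ := keyB ε
        rw [max_eq_right (by linarith [hmax v])]; ring
    have hsum2 : 0 ≤ ∑ ε ∈ univ.filter (fun ε => j ∈ e ε), wia j ε * max (x j - xa ε) 0 :=
      Finset.sum_nonneg fun ε hε => by
        have hje : j ∈ e ε := (Finset.mem_filter.mp hε).2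
        exact mul_nonneg (le_of_lt (hwia ε j hje)) (le_max_right _ _)
    have hrj := hr j
    rw [hsum1] at hrj
    have hite : (if j ∈ R then (1:ℝ) else 0) ≤ 1 := by split_ifs <;> norm_num
    nlinarith [hd j, mul_nonneg (le_of_lt hγ')
      hsum2]
  refine ⟨fun i => ⟨hx0 i, hle1 i⟩, fun ε => ?_⟩
  obtain ⟨v, hv, hvle⟩ := keyA ε
  obtain ⟨u, hu, hule⟩ := keyB ε
  exact ⟨⟨hxa0 ε, le_trans hvle (hle1 v)⟩, ⟨hxb0 ε, le_trans hule (hle1 u)⟩⟩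
end

section
/- Let V be a finite vertex set, R ⊆ V, d_i > 0 for i ∈ V, γ > 0, and let 𝓔 be a finite collection of nonempty hyperedges e ⊆ V, each carrying positive weights w_{i a_e}, w_{b_e i} (i ∈ e) and w_{a_e b_e} and auxiliary values x_{a_e}, x_{b_e} ∈ ℝ. For arbitrary real values x_i (i ∈ V), define the residuals r_i (i ∈ V), r_{a_e} and r_{b_e} (e ∈ 𝓔) by r_i = (1/γ) Σ_{e: i∈e} w_{b_e i}(x_{b_e} − x_i)₊ − (1/γ) Σ_{e: i∈e} w_{i a_e}(x_i − x_{a_e})₊ + d_i(𝟙[i∈R] − x_i), r_{a_e} = −(1/γ) w_{a_e b_e}(x_{a_e} − x_{b_e})₊ + (1/γ) Σ_{v∈e} w_{v a_e}(x_v − x_{a_e})₊, and r_{b_e} = (1/γ) w_{a_e b_e}(x_{a_e} − x_{b_e})₊ − (1/γ) Σ_{v∈e} w_{b_e v}(x_{b_e} − x_v)₊, where (t)₊ = max{t,0}. Then Σ_{i∈V} r_i + Σ_{e∈𝓔} ( r_{a_e} + r_{b_e} ) = Σ_{i∈R} d_i(1 − x_i) − Σ_{i∈V∖R} d_i x_i.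 In particular, the total residual depends only on the values x_i at original nodes, so changing only the auxiliary values x_{a_e}, x_{b_e} leaves it unchanged. -/
open Finset

lemma swap_sum {V E : Type*} [Fintype V] [Fintype E] [DecidableEq V] (e : E → Finset V) (f : V → E → ℝ) :
    ∑ i : V, ∑ ε ∈ univ.filter (fun ε => i ∈ e ε), f i ε = ∑ ε : E, ∑ v ∈ e ε, f v ε := by
  simp only [sum_filter]
  rw [Finset.sum_comm]
  refine Finset.sum_congr rfl fun ε _ => ?_
  rw [← Finset.sum_filter]
  refine Finset.sum_congr ?_ fun _ _ => rfl
  simp [Finset.filter_mem_eq_inter]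

/-- Total residual identity for the localized hypergraph diffusion: the sum of all
residuals (over original nodes and both auxiliary nodes of every hyperedge gadget)
equals `Σ_{i∈R} d_i (1 − x_i) − Σ_{i∉R} d_i x_i`; in particular it depends only on the
values at the original nodes. -/
theorem residual_sum_identity {V E : Type*} [Fintype V] [Fintype E] [DecidableEq V]
    (R : Finset V) (d : V → ℝ) (hd : ∀ v, 0 < d v) (γ : ℝ) (hγ : 0 < γ)
    (e : E → Finset V) (he : ∀ ε, (e ε).Nonempty)
    (wia : V → E → ℝ) (wbi : E → V → ℝ) (wab : E → ℝ)
    (hwia : ∀ ε, ∀ v ∈ e ε, 0 < wia v ε) (hwbi : ∀ ε, ∀ v ∈ e ε, 0 < wbi ε v)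
    (hwab : ∀ ε, 0 < wab ε)
    (x : V → ℝ) (xa xb : E → ℝ) :
    (∑ i : V,
        ((1 / γ) * ∑ ε ∈ univ.filter (fun ε => i ∈ e ε), wbi ε i * max (xb ε - x i) 0
          - (1 / γ) * ∑ ε ∈ univ.filter (fun ε => i ∈ e ε), wia i ε * max (x i - xa ε) 0
          + d i * ((if i ∈ R then 1 else 0) - x i)))
      + ∑ ε : E,
          ((-(1 / γ) * (wab ε * max (xa ε - xb ε) 0)
              + (1 / γ) * ∑ v ∈ e ε, wia v ε * max (x v - xa ε) 0)
            + ((1 / γ) * (wab ε * max (xa ε - xb ε) 0)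
              - (1 / γ) * ∑ v ∈ e ε, wbi ε v * max (xb ε - x v) 0))
      = ∑ i ∈ R, d i * (1 - x i) - ∑ i ∈ Rᶜ, d i * x i := by
  have h1 := swap_sum e (fun i ε => wbi ε i * max (xb ε - x i) 0)
  have h2 := swap_sum e (fun i ε => wia i ε * max (x i - xa ε) 0)
  simp only [sum_add_distrib, sum_sub_distrib, ← mul_sum, h1, h2]
  have : ∑ i : V, d i * ((if i ∈ R then 1 else 0) - x i)
      = ∑ i ∈ R, d i * (1 - x i) - ∑ i ∈ Rᶜ, d i * x i := by
    rw [← Finset.sum_add_sum_compl R (fun i => d i * ((if i ∈ R then 1 else 0) - x i)),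
      sub_eq_add_neg, ← Finset.sum_neg_distrib]
    congr 1
    · exact Finset.sum_congr rfl fun i hi => by rw [if_pos hi]
    · exact Finset.sum_congr rfl fun i hi => by
        rw [if_neg (by simpa using hi)]; ring
  rw [this]
  ring
end

section
/- Let γ, κ, δ, d_i > 0, 0 < ρ < 1, and χ ∈ {0,1}. Let (w_b, x_b)_{b∈B} and (w_a, x_a)_{a∈A} be finite families with all weights w_b, w_a > 0 and Σ_{b∈B} w_b + Σ_{a∈A} w_a ≤ δ d_i, and let x_i ∈ ℝ. Define, for Δ ≥ 0, g(Δ) = (1/γ) Σ_{b∈B} w_b (x_b − x_i − Δ)₊ − (1/γ) Σ_{a∈A} w_a (x_i + Δ − x_a)₊ + κ d_i (χ − x_i − Δ), where (t)₊ = max{t,0}. If g(0) > κ d_i and Δ* ≥ 0 satisfies g(Δ*) = ρ κ d_i, then Δ* > γκ(1−ρ)/(γκ + δ). Consequently, a hyperpush that raises x_i by Δ* decreases the total residual of the diffusion by at least γκ(1−ρ) d_i /(γκ + δ). -/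
private lemma max_sub_le (x Δ : ℝ) (hΔ : 0 ≤ Δ) :
    max x 0 - max (x - Δ) 0 ≤ Δ := by
  have h1 := le_max_left (x - Δ) 0
  have h2 := le_max_right (x - Δ) 0
  have : max x 0 ≤ max (x - Δ) 0 + Δ := max_le (by linarith) (by linarith)
  linarith

/-- Per-iteration progress bound of an LHQD hyperpush: if the residual of node `i`
exceeds `κ d_i` and the hyperpush resets it to `ρ κ d_i` by raising `x_i` by `Δ*`,
then `Δ* > γκ(1-ρ)/(γκ+δ)`; consequently the total residual, which decreases by
`d_i Δ*`, decreases by at least `γκ(1-ρ) d_i/(γκ+δ)`. -/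
theorem hyperpush_progress {B A : Type*} [Fintype B] [Fintype A]
    (γ κ δ di ρ χ : ℝ)
    (hγ : 0 < γ) (hκ : 0 < κ) (hδ : 0 < δ) (hdi : 0 < di)
    (hρ0 : 0 < ρ) (hρ1 : ρ < 1) (hχ : χ = 0 ∨ χ = 1)
    (wb xb : B → ℝ) (wa xa : A → ℝ)
    (hwb : ∀ b, 0 < wb b) (hwa : ∀ a, 0 < wa a)
    (hwsum : ∑ b, wb b + ∑ a, wa a ≤ δ * di)
    (xi : ℝ) (g : ℝ → ℝ)
    (hg : ∀ Δ, g Δ = (1 / γ) * ∑ b, wb b * max (xb b - xi - Δ) 0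
        - (1 / γ) * ∑ a, wa a * max (xi + Δ - xa a) 0 + κ * di * (χ - xi - Δ))
    (h0 : κ * di < g 0)
    (Δs : ℝ) (hΔ0 : 0 ≤ Δs) (hΔ : g Δs = ρ * κ * di) :
    γ * κ * (1 - ρ) / (γ * κ + δ) < Δs ∧
      γ * κ * (1 - ρ) * di / (γ * κ + δ) ≤ di * Δs := by
  have hB : ∑ b, wb b * max (xb b - xi - 0) 0 - ∑ b, wb b * max (xb b - xi - Δs) 0
      ≤ (∑ b, wb b) * Δs := by
    rw [← Finset.sum_sub_distrib, Finset.sum_mul]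
    apply Finset.sum_le_sum
    intro b _
    have h := max_sub_le (xb b - xi) Δs hΔ0
    have hw := (hwb b).le
    simp only [sub_zero]
    nlinarith
  have hA : ∑ a, wa a * max (xi + Δs - xa a) 0 - ∑ a, wa a * max (xi + 0 - xa a) 0
      ≤ (∑ a, wa a) * Δs := by
    rw [← Finset.sum_sub_distrib, Finset.sum_mul]
    apply Finset.sum_le_sum
    intro a _
    have h := max_sub_le (xi + Δs - xa a) Δs hΔ0
    have hw := (hwa a).le
    have : xi + 0 - xa a = (xi + Δs - xa a) - Δs := by ring
    rw [this]
    nlinarith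
  have hγ' : 0 < 1 / γ := by positivity
  have key : g 0 - g Δs ≤ (1 / γ) * ((∑ b, wb b) + (∑ a, wa a)) * Δs + κ * di * Δs := by
    rw [hg 0, hg Δs]
    nlinarith [hB, hA]
  have hsum : (1 / γ) * ((∑ b, wb b) + (∑ a, wa a)) * Δs ≤ (1 / γ) * (δ * di) * Δs := by
    have := mul_le_mul_of_nonneg_right hwsum hΔ0
    nlinarith
  have hlow : κ * di * (1 - ρ) < g 0 - g Δs := by
    rw [hΔ]; nlinarith
  have hmain : κ * di * (1 - ρ) < (1 / γ) * (δ * di) * Δs + κ * di * Δs := by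
    linarith
  have hpos : 0 < γ * κ + δ := by positivity
  have hγγ : γ * (1 / γ) = 1 := by field_simp
  have hmain2 : γ * κ * (1 - ρ) * di < (γ * κ + δ) * Δs * di := by
    have h := mul_lt_mul_of_pos_left hmain hγ
    have e : γ * (1 / γ * (δ * di) * Δs + κ * di * Δs)
        = δ * di * Δs + γ * (κ * di * Δs) := by
      field_simp
    rw [e] at h
    nlinarith [h]
  have h1 : γ * κ * (1 - ρ) / (γ * κ + δ) < Δs := by
    rw [div_lt_iff₀ hpos]
    nlinarith [hmain2, hdi]
  refine ⟨h1, ?_⟩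
  have := mul_le_mul_of_nonneg_left h1.le hdi.le
  calc γ * κ * (1 - ρ) * di / (γ * κ + δ) = di * (γ * κ * (1 - ρ) / (γ * κ + δ)) := by ring
    _ ≤ di * Δs := this
end

section
/- Let γ, κ, d_i > 0, 0 < ρ < 1, and χ ∈ {0,1}. Let (w_b, x_b)_{b∈B} and (w_a, x_a)_{a∈A} be finite families with all weights w_b, w_a > 0 and all values x_b, x_a ∈ [0,1], and let x_i ∈ [0,1]. Define, for Δ ∈ ℝ, g(Δ) = (1/γ) Σ_{b∈B} w_b (x_b − x_i − Δ)₊ − (1/γ) Σ_{a∈A} w_a (x_i + Δ − x_a)₊ + κ d_i (χ − x_i − Δ), where (t)₊ = max{t,0}. Then g is continuous and strictly decreasing, g(1) ≤ 0, and if g(0) > κ d_i, there exists exactly one Δ* with g(Δ*) = ρ κ d_i, and this Δ* lies in the open interval (0, 1). -/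
/-- Existence and uniqueness of the push amount in an LHQD hyperpush: the post-push
residual function `g` is continuous and strictly decreasing, satisfies `g 1 ≤ 0`, and
if `g 0 > κ d_i` then there is exactly one `Δ*` with `g Δ* = ρ κ d_i`, and it lies in
the open interval `(0,1)`. -/
theorem hyperpush_unique {B A : Type*} [Fintype B] [Fintype A]
    (γ κ di ρ χ : ℝ)
    (hγ : 0 < γ) (hκ : 0 < κ) (hdi : 0 < di)
    (hρ0 : 0 < ρ) (hρ1 : ρ < 1) (hχ : χ = 0 ∨ χ = 1)
    (wb xb : B → ℝ) (wa xa : A → ℝ)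
    (hwb : ∀ b, 0 < wb b) (hwa : ∀ a, 0 < wa a)
    (hxb : ∀ b, xb b ∈ Set.Icc (0 : ℝ) 1) (hxa : ∀ a, xa a ∈ Set.Icc (0 : ℝ) 1)
    (xi : ℝ) (hxi : xi ∈ Set.Icc (0 : ℝ) 1)
    (g : ℝ → ℝ)
    (hg : ∀ Δ, g Δ = (1 / γ) * ∑ b, wb b * max (xb b - xi - Δ) 0
        - (1 / γ) * ∑ a, wa a * max (xi + Δ - xa a) 0 + κ * di * (χ - xi - Δ)) :
    Continuous g ∧ StrictAnti g ∧ g 1 ≤ 0 ∧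
      (κ * di < g 0 →
        (∃! Δ : ℝ, g Δ = ρ * κ * di) ∧
          ∀ Δ : ℝ, g Δ = ρ * κ * di → Δ ∈ Set.Ioo (0 : ℝ) 1) := by
  have hγ' : (0:ℝ) < 1 / γ := one_div_pos.mpr hγ
  have hκd : 0 < κ * di := mul_pos hκ hdi
  have hgfun : g = fun Δ => (1 / γ) * ∑ b, wb b * max (xb b - xi - Δ) 0
        - (1 / γ) * ∑ a, wa a * max (xi + Δ - xa a) 0 + κ * di * (χ - xi - Δ) :=
    funext hg
  have hcont : Continuous g := by
    rw [hgfun]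
    apply Continuous.add
    · apply Continuous.sub
      · exact continuous_const.mul (continuous_finset_sum _ fun b _ =>
          continuous_const.mul ((continuous_const.sub continuous_id).max continuous_const))
      · exact continuous_const.mul (continuous_finset_sum _ fun a _ =>
          continuous_const.mul ((continuous_const.add continuous_id |>.sub
            continuous_const).max continuous_const))
    · exact continuous_const.mul ((continuous_const.sub continuous_const).sub continuous_id)
  have hanti : StrictAnti g := by
    intro x y hxy
    rw [hg x, hg y]
    have h1 : ∑ b, wb b * max (xb b - xi - y) 0 ≤ ∑ b, wb b * max (xb b - xi - x) 0 := by
      apply Finset.sum_le_sum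
      intro b _
      exact mul_le_mul_of_nonneg_left (max_le_max (by linarith) le_rfl) (hwb b).le
    have h2 : ∑ a, wa a * max (xi + x - xa a) 0 ≤ ∑ a, wa a * max (xi + y - xa a) 0 := by
      apply Finset.sum_le_sum
      intro a _
      exact mul_le_mul_of_nonneg_left (max_le_max (by linarith) le_rfl) (hwa a).le
    have hb := mul_le_mul_of_nonneg_left h1 hγ'.le
    have ha := mul_le_mul_of_nonneg_left h2 hγ'.le
    have hc : κ * di * (χ - xi - y) < κ * di * (χ - xi - x) := by nlinarith
    linarith
  have hg1 : g 1 ≤ 0 := by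
    rw [hg]
    have hb : ∑ b, wb b * max (xb b - xi - 1) 0 = 0 := Finset.sum_eq_zero fun b _ => by
      have h1 := (hxb b).2; have h2 := hxi.1
      rw [max_eq_right (by linarith)]; ring
    have ha : 0 ≤ ∑ a, wa a * max (xi + 1 - xa a) 0 :=
      Finset.sum_nonneg fun a _ => mul_nonneg (hwa a).le (le_max_right _ _)
    have hχ1 : χ ≤ 1 := by rcases hχ with h|h <;> simp [h]
    have hc : κ * di * (χ - xi - 1) ≤ 0 := by nlinarith [hxi.1]
    rw [hb]
    nlinarith
  refine ⟨hcont, hanti, hg1, fun h0 => ?_⟩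
  have hρκd : ρ * κ * di < κ * di := by nlinarith
  have hρκd0 : 0 < ρ * κ * di := by positivity
  have htarget : ρ * κ * di ∈ Set.Icc (g 1) (g 0) := ⟨by linarith, by linarith⟩
  obtain ⟨Δ, _, hΔ⟩ := intermediate_value_Icc' (by norm_num : (0:ℝ) ≤ 1)
    hcont.continuousOn htarget
  have hopen : ∀ Δ' : ℝ, g Δ' = ρ * κ * di → Δ' ∈ Set.Ioo (0:ℝ) 1 := by
    intro Δ' hΔ'
    constructor
    · by_contra h
      push_neg at h
      have := hanti.antitone h
      linarith
    · by_contra h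
      push_neg at h
      have := hanti.antitone h
      linarith
  exact ⟨⟨Δ, hΔ, fun y hy => hanti.injective (hy.trans hΔ.symm)⟩, hopen⟩
end

section
/- Let H = (V,𝓔) be a hypergraph as above and γ > 0. For every set S ⊆ V with 0 < vol(S) ≤ M/2, the minimizer x(γ,S) of Q satisfies p(γ,S)(S) = Σ_{v∈S} d_v x_v(γ,S) ≥ 1 − φ(S)/γ. -/
open Finset

noncomputable section

/-- δ-linear splitting penalty of the set `S` within hyperedge `ε`:
`f_ε(e_ε ∩ S) = min {|e_ε ∩ S|, |e_ε ∖ S|, δ_ε}`. -/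
def hsplit {V E : Type*} [DecidableEq V] (e : E → Finset V) (δe : E → ℝ)
    (ε : E) (S : Finset V) : ℝ :=
  min (min ((e ε ∩ S).card : ℝ) ((e ε \ S).card : ℝ)) (δe ε)

/-- Hypergraph cut `cut_H(S) = Σ_ε f_ε(e_ε ∩ S)`. -/
def hcut {V E : Type*} [Fintype E] [DecidableEq V] (e : E → Finset V) (δe : E → ℝ)
    (S : Finset V) : ℝ :=
  ∑ ε : E, hsplit e δe ε S

/-- Degree `d_v = Σ_{ε : v ∈ e_ε} f_ε({v})`. -/
def hdeg {V E : Type*} [Fintype E] [DecidableEq V] (e : E → Finset V) (δe : E → ℝ)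
    (v : V) : ℝ :=
  ∑ ε ∈ univ.filter (fun ε => v ∈ e ε), hsplit e δe ε {v}

/-- Volume `vol(S) = Σ_{v∈S} d_v`. -/
def hvol {V E : Type*} [Fintype E] [DecidableEq V] (e : E → Finset V) (δe : E → ℝ)
    (S : Finset V) : ℝ :=
  ∑ v ∈ S, hdeg e δe v

/-- Total volume `M = vol(V)`. -/
def hM {V E : Type*} [Fintype V] [Fintype E] [DecidableEq V] (e : E → Finset V)
    (δe : E → ℝ) : ℝ :=
  hvol e δe univ

/-- Hypergraph conductance `φ(S) = cut_H(S) / min(vol S, M − vol S)`. -/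
def hcond {V E : Type*} [Fintype V] [Fintype E] [DecidableEq V] (e : E → Finset V)
    (δe : E → ℝ) (S : Finset V) : ℝ :=
  hcut e δe S / min (hvol e δe S) (hM e δe - hvol e δe S)

/-- Inner gadget objective of hyperedge `ε`:
`Σ_{v∈e_ε} ((x_v−a)₊² + (b−x_v)₊²) + δ_ε (a−b)₊²`. -/
def innerQ {V E : Type*} [DecidableEq V] (e : E → Finset V) (δe : E → ℝ) (ε : E)
    (x : V → ℝ) (a b : ℝ) : ℝ :=
  ∑ v ∈ e ε, ((max (x v - a) 0) ^ 2 + (max (b - x v) 0) ^ 2)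
    + δe ε * (max (a - b) 0) ^ 2

/-- `Q_ε(x) = min_{a,b∈ℝ} innerQ`. -/
def Qe {V E : Type*} [DecidableEq V] (e : E → Finset V) (δe : E → ℝ) (ε : E)
    (x : V → ℝ) : ℝ :=
  sInf {q : ℝ | ∃ a b : ℝ, q = innerQ e δe ε x a b}

/-- The diffusion objective
`Q(x) = γ Σ_v d_v (x_v − 1_S(v)/vol S)² + Σ_ε Q_ε(x)` for a seed set `S`. -/
def Qobj {V E : Type*} [Fintype V] [Fintype E] [DecidableEq V] (e : E → Finset V)
    (δe : E → ℝ) (γ : ℝ) (S : Finset V) (x : V → ℝ) : ℝ :=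
  γ * ∑ v : V, hdeg e δe v * (x v - (if v ∈ S then 1 else 0) / hvol e δe S) ^ 2
    + ∑ ε : E, Qe e δe ε x

end

section helpers
variable {V E : Type*} [DecidableEq V]

lemma pp_nonneg (u : ℝ) : 0 ≤ max u 0 := le_max_right u 0

lemma pp_sq_mono {u v : ℝ} (h : u ≤ v) : (max u 0)^2 ≤ (max v 0)^2 :=
  pow_le_pow_left₀ (pp_nonneg u) (max_le_max h le_rfl) 2

lemma pp_shift_sq {u t : ℝ} (ht : 0 ≤ t) :
    (max (u+t) 0)^2 ≤ (max u 0)^2 + 2*t*(max u 0) + t^2 := by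
  have h1 : max (u+t) 0 ≤ max u 0 + t :=
    max_le (by linarith [le_max_left u 0]) (by linarith [pp_nonneg u])
  nlinarith [pp_nonneg (u+t), pp_nonneg u]

lemma shift_pairA {u w c t : ℝ} (ht : 0 ≤ t) (huc : max u 0 ≤ c) :
    (max (u+t) 0)^2 + (max (w-t) 0)^2
      ≤ (max u 0)^2 + (max w 0)^2 + (2*t*c + t^2) := by
  have h1 := pp_shift_sq (u := u) ht
  have h2 := pp_sq_mono (show w - t ≤ w by linarith)
  nlinarith [mul_le_mul_of_nonneg_left huc (show (0:ℝ) ≤ 2*t by linarith)]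

def clampc (c u : ℝ) : ℝ := min (max u 0) c

lemma clampc_nonneg {c : ℝ} (hc : 0 ≤ c) (u : ℝ) : 0 ≤ clampc c u :=
  le_min (pp_nonneg u) hc

lemma clampc_le_c (c u : ℝ) : clampc c u ≤ c := min_le_right _ _

lemma clampc_mono {c u v : ℝ} (h : u ≤ v) : clampc c u ≤ clampc c v :=
  min_le_min (max_le_max h le_rfl) le_rfl

lemma clampc_pp (c u v : ℝ) : max (clampc c u - clampc c v) 0 ≤ max (u - v) 0 := by
  rcases le_total u v with h | h
  · exact max_le (by linarith [clampc_mono (c:=c) h, pp_nonneg (u - v)]) (le_max_right _ _)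
  · refine max_le ?_ (le_max_right _ _)
    have h2 : clampc c u - clampc c v ≤ u - v := by
      unfold clampc; simp only [min_def, max_def]; split_ifs <;> linarith
    exact h2.trans (le_max_left _ _)

lemma clampc_pp_sq (c u v : ℝ) :
    (max (clampc c u - clampc c v) 0)^2 ≤ (max (u-v) 0)^2 :=
  pow_le_pow_left₀ (pp_nonneg _) (clampc_pp c u v) 2

lemma clampc_eq_self {c u : ℝ} (h0 : 0 ≤ u) (h1 : u ≤ c) : clampc c u = u := by
  unfold clampc; rw [max_eq_left h0, min_eq_left h1]

lemma pp_sq_le (a : ℝ) : (max a 0)^2 ≤ a^2 := by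
  rcases le_total a 0 with h | h
  · rw [max_eq_right h]; nlinarith [sq_nonneg a]
  · rw [max_eq_left h]

lemma clampc_sq_le {c y u : ℝ} (hy0 : 0 ≤ y) (hyc : y ≤ c) :
    (clampc c u - y)^2 ≤ (u - y)^2 := by
  have h1 := clampc_pp c u y
  have h2 := clampc_pp c y u
  rw [clampc_eq_self hy0 hyc] at h1 h2
  rcases le_total y (clampc c u) with h | h
  · calc (clampc c u - y)^2 = (max (clampc c u - y) 0)^2 := by
          rw [max_eq_left (by linarith)]
      _ ≤ (max (u - y) 0)^2 := pow_le_pow_left₀ (pp_nonneg _) h1 2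
      _ ≤ (u - y)^2 := pp_sq_le _
  · calc (clampc c u - y)^2 = (max (y - clampc c u) 0)^2 := by
          rw [max_eq_left (by linarith)]; ring
      _ ≤ (max (y - u) 0)^2 := pow_le_pow_left₀ (pp_nonneg _) h2 2
      _ ≤ (y - u)^2 := pp_sq_le _
      _ = (u - y)^2 := by ring

lemma clampc_sq_lt {c y u : ℝ} (hc : 0 ≤ c) (hy0 : 0 ≤ y) (hyc : y ≤ c)
    (hu : u ≠ clampc c u) : (clampc c u - y)^2 < (u - y)^2 := by
  have hcase : u < 0 ∨ c < u := by
    by_contra h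
    push_neg at h
    exact hu (clampc_eq_self h.1 h.2).symm
  rcases hcase with h | h
  · have he : clampc c u = 0 := by unfold clampc; rw [max_eq_right h.le, min_eq_left hc]
    rw [he]; nlinarith
  · have he : clampc c u = c := by
      unfold clampc; rw [max_eq_left (by linarith), min_eq_right h.le]
    rw [he]; nlinarith

variable (e : E → Finset V) (δe : E → ℝ) (ε : E)

lemma innerQ_nonneg (hδ : 0 ≤ δe ε) (x : V → ℝ) (a b : ℝ) :
    0 ≤ innerQ e δe ε x a b :=
  add_nonneg (Finset.sum_nonneg fun v _ => by positivity) (mul_nonneg hδ (sq_nonneg _))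

lemma Qe_bdd (hδ : 0 ≤ δe ε) (x : V → ℝ) :
    BddBelow {q : ℝ | ∃ a b : ℝ, q = innerQ e δe ε x a b} :=
  ⟨0, fun q ⟨a, b, hq⟩ => hq ▸ innerQ_nonneg e δe ε hδ x a b⟩

lemma Qe_le_innerQ (hδ : 0 ≤ δe ε) (x : V → ℝ) (a b : ℝ) :
    Qe e δe ε x ≤ innerQ e δe ε x a b :=
  csInf_le (Qe_bdd e δe ε hδ x) ⟨a, b, rfl⟩

lemma Qe_near (x : V → ℝ) {η : ℝ} (hη : 0 < η) :
    ∃ a b : ℝ, innerQ e δe ε x a b < Qe e δe ε x + η := by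
  have hne : {q : ℝ | ∃ a b : ℝ, q = innerQ e δe ε x a b}.Nonempty :=
    ⟨innerQ e δe ε x 0 0, 0, 0, rfl⟩
  obtain ⟨q, ⟨a, b, rfl⟩, hlt⟩ := Real.lt_sInf_add_pos hne hη
  exact ⟨a, b, hlt⟩

lemma innerQ_clamp (hδ : 0 ≤ δe ε) {c : ℝ} (x : V → ℝ)
    (hxcl : ∀ v, x v = clampc c (x v)) (a b : ℝ) :
    innerQ e δe ε x (clampc c a) (clampc c b) ≤ innerQ e δe ε x a b := by
  unfold innerQ
  refine add_le_add (Finset.sum_le_sum fun v _ => add_le_add ?_ ?_)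
    (mul_le_mul_of_nonneg_left (clampc_pp_sq c a b) hδ)
  · calc (max (x v - clampc c a) 0)^2
        = (max (clampc c (x v) - clampc c a) 0)^2 := by rw [← hxcl v]
      _ ≤ (max (x v - a) 0)^2 := clampc_pp_sq c (x v) a
  · calc (max (clampc c b - x v) 0)^2
        = (max (clampc c b - clampc c (x v)) 0)^2 := by rw [← hxcl v]
      _ ≤ (max (b - x v) 0)^2 := clampc_pp_sq c b (x v)

lemma Qe_clamp_le (hδ : 0 ≤ δe ε) {c : ℝ} (hc : 0 ≤ c) (x : V → ℝ) :
    Qe e δe ε (fun v => clampc c (x v)) ≤ Qe e δe ε x := by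
  refine le_of_forall_pos_le_add fun η hη => ?_
  obtain ⟨a, b, hab⟩ := Qe_near e δe ε x hη
  have h1 : innerQ e δe ε (fun v => clampc c (x v)) (clampc c a) (clampc c b)
      ≤ innerQ e δe ε x a b := by
    unfold innerQ
    refine add_le_add (Finset.sum_le_sum fun v _ => add_le_add ?_ ?_)
      (mul_le_mul_of_nonneg_left (clampc_pp_sq c a b) hδ)
    · exact clampc_pp_sq c (x v) a
    · exact clampc_pp_sq c b (x v)
  calc Qe e δe ε (fun v => clampc c (x v))
      ≤ innerQ e δe ε (fun v => clampc c (x v)) (clampc c a) (clampc c b) :=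
        Qe_le_innerQ e δe ε hδ _ _ _
    _ ≤ innerQ e δe ε x a b := h1
    _ ≤ Qe e δe ε x + η := hab.le

end helpers

section edge
variable {V E : Type*} [DecidableEq V]
variable (e : E → Finset V) (δe : E → ℝ) (ε : E)

lemma edge_shift (hδ : 0 ≤ δe ε) {c t : ℝ} (hc : 0 ≤ c) (ht : 0 ≤ t)
    (x : V → ℝ) (hx0 : ∀ v, 0 ≤ x v) (hxc : ∀ v, x v ≤ c) (S : Finset V)
    {a b : ℝ} (ha0 : 0 ≤ a) (hac : a ≤ c) (hb0 : 0 ≤ b) (hbc : b ≤ c) :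
    Qe e δe ε (fun v => x v + (if v ∈ S then t else 0))
      ≤ innerQ e δe ε x a b + (2*t*c + t^2) * hsplit e δe ε S := by
  set xt : V → ℝ := fun v => x v + (if v ∈ S then t else 0) with hxt
  set C : ℝ := 2*t*c + t^2 with hC_def
  have hC : 0 ≤ C := by positivity
  -- (i) keep (a,b): pay on e ∩ S
  have h1 : innerQ e δe ε xt a b ≤ innerQ e δe ε x a b + C * ((e ε ∩ S).card : ℝ) := by
    unfold innerQ
    have hsum : ∑ v ∈ e ε, ((max (xt v - a) 0)^2 + (max (b - xt v) 0)^2)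
        ≤ ∑ v ∈ e ε, (((max (x v - a) 0)^2 + (max (b - x v) 0)^2)
            + (if v ∈ S then C else 0)) := by
      refine Finset.sum_le_sum fun v _ => ?_
      by_cases hv : v ∈ S
      · simp only [hxt, hv, if_true]
        have e1 : x v + t - a = (x v - a) + t := by ring
        have e2 : b - (x v + t) = (b - x v) - t := by ring
        rw [e1, e2]
        have h := shift_pairA (u := x v - a) (w := b - x v) (c := c) ht
          (max_le (by linarith [hxc v]) hc)
        rw [hC_def]; linarith
      · simp only [hxt, hv, if_false, add_zero, le_refl]
    have hrw : ∑ v ∈ e ε, (((max (x v - a) 0)^2 + (max (b - x v) 0)^2)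
            + (if v ∈ S then C else 0))
        = ∑ v ∈ e ε, ((max (x v - a) 0)^2 + (max (b - x v) 0)^2)
            + C * ((e ε ∩ S).card : ℝ) := by
      rw [Finset.sum_add_distrib, Finset.sum_ite_mem, Finset.sum_const, nsmul_eq_mul, mul_comm]
    rw [hrw] at hsum
    linarith [hsum]
  -- (ii) shift both by t: pay on e \ S
  have h2 : innerQ e δe ε xt (a + t) (b + t)
      ≤ innerQ e δe ε x a b + C * (((e ε) \ S).card : ℝ) := by
    unfold innerQ
    have hδt : a + t - (b + t) = a - b := by ring
    rw [hδt]
    have hsum : ∑ v ∈ e ε, ((max (xt v - (a+t)) 0)^2 + (max ((b+t) - xt v) 0)^2)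
        ≤ ∑ v ∈ e ε, (((max (x v - a) 0)^2 + (max (b - x v) 0)^2)
            + (if v ∉ S then C else 0)) := by
      refine Finset.sum_le_sum fun v _ => ?_
      by_cases hv : v ∈ S
      · simp only [hxt, hv, if_true, not_true, if_false]
        have e1 : x v + t - (a + t) = x v - a := by ring
        have e2 : b + t - (x v + t) = b - x v := by ring
        rw [e1, e2, add_zero]
      · simp only [hxt, hv, if_false, not_false_iff, if_true, add_zero]
        have e1 : x v - (a + t) = (x v - a) - t := by ring
        have e2 : b + t - x v = (b - x v) + t := by ring
        rw [e1, e2]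
        have h := shift_pairA (u := b - x v) (w := x v - a) (c := c) ht
          (max_le (by linarith [hx0 v]) hc)
        rw [hC_def]; linarith
    have hrw : ∑ v ∈ e ε, (if v ∉ S then C else 0) = C * (((e ε) \ S).card : ℝ) := by
      rw [Finset.sdiff_eq_filter]
      rw [Finset.sum_ite (f := fun _ => C) (g := fun _ => (0:ℝ))]
      simp [mul_comm]
    have hrw2 : ∑ v ∈ e ε, (((max (x v - a) 0)^2 + (max (b - x v) 0)^2)
            + (if v ∉ S then C else 0))
        = ∑ v ∈ e ε, ((max (x v - a) 0)^2 + (max (b - x v) 0)^2)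
            + C * (((e ε) \ S).card : ℝ) := by
      rw [Finset.sum_add_distrib, hrw]
    rw [hrw2] at hsum
    linarith [hsum]
  -- (iii) shift a by t: pay δ
  have h3 : innerQ e δe ε xt (a + t) b
      ≤ innerQ e δe ε x a b + C * δe ε := by
    unfold innerQ
    have hsum : ∑ v ∈ e ε, ((max (xt v - (a+t)) 0)^2 + (max (b - xt v) 0)^2)
        ≤ ∑ v ∈ e ε, ((max (x v - a) 0)^2 + (max (b - x v) 0)^2) := by
      refine Finset.sum_le_sum fun v _ => ?_
      by_cases hv : v ∈ S
      · simp only [hxt, hv, if_true]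
        have e1 : x v + t - (a + t) = x v - a := by ring
        rw [e1]
        have h2' : (max (b - (x v + t)) 0)^2 ≤ (max (b - x v) 0)^2 :=
          pp_sq_mono (by linarith)
        linarith
      · simp only [hxt, hv, if_false, add_zero]
        have h1' : (max (x v - (a + t)) 0)^2 ≤ (max (x v - a) 0)^2 :=
          pp_sq_mono (by linarith)
        linarith
    have hδterm : δe ε * (max (a + t - b) 0)^2
        ≤ δe ε * (max (a - b) 0)^2 + C * δe ε := by
      have e1 : a + t - b = (a - b) + t := by ring
      rw [e1]
      have h := pp_shift_sq (u := a - b) ht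
      have hab : max (a - b) 0 ≤ c := max_le (by linarith) hc
      have h2' : (max ((a-b)+t) 0)^2 ≤ (max (a-b) 0)^2 + C := by
        rw [hC_def]
        nlinarith [mul_le_mul_of_nonneg_left hab (show (0:ℝ) ≤ 2*t by linarith)]
      nlinarith [h2', hδ]
    linarith [hsum, hδterm]
  -- combine by cases on the min
  have key : ∀ m : ℝ, (m = ((e ε ∩ S).card : ℝ) ∨ m = (((e ε) \ S).card : ℝ) ∨ m = δe ε) →
      hsplit e δe ε S = m → Qe e δe ε xt ≤ innerQ e δe ε x a b + C * hsplit e δe ε S := by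
    intro m hm hs
    rcases hm with hm | hm | hm
    · rw [hs, hm]; exact (Qe_le_innerQ e δe ε hδ xt a b).trans h1
    · rw [hs, hm]; exact (Qe_le_innerQ e δe ε hδ xt (a+t) (b+t)).trans h2
    · rw [hs, hm]; exact (Qe_le_innerQ e δe ε hδ xt (a+t) b).trans h3
  have hmc : hsplit e δe ε S = ((e ε ∩ S).card : ℝ) ∨
      hsplit e δe ε S = (((e ε) \ S).card : ℝ) ∨ hsplit e δe ε S = δe ε := by
    unfold hsplit
    rcases min_cases (min ((e ε ∩ S).card : ℝ) (((e ε) \ S).card : ℝ)) (δe ε) with ⟨h, _⟩ | ⟨h, _⟩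
    · rcases min_cases ((e ε ∩ S).card : ℝ) (((e ε) \ S).card : ℝ) with ⟨h', _⟩ | ⟨h', _⟩
      · left; rw [h, h']
      · right; left; rw [h, h']
    · right; right; exact h
  rcases hmc with hm | hm | hm
  · exact key _ (Or.inl rfl) hm |>.trans (by rw [hm])
  · exact key _ (Or.inr (Or.inl rfl)) hm |>.trans (by rw [hm])
  · exact key _ (Or.inr (Or.inr rfl)) hm |>.trans (by rw [hm])

end edge

/-- Seed-mass lower bound: for a seed set `S` with `0 < vol S ≤ M/2`, the minimizer
`x = x(γ,S)` of the diffusion objective satisfies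
`p(γ,S)(S) = Σ_{v∈S} d_v x_v ≥ 1 − φ(S)/γ`. -/
theorem seed_mass_lower_bound {V E : Type*} [Fintype V] [Fintype E] [DecidableEq V]
    (e : E → Finset V) (δe : E → ℝ)
    (hcard : ∀ ε, 2 ≤ (e ε).card) (hδe : ∀ ε, 1 ≤ δe ε)
    (hcov : ∀ v : V, ∃ ε, v ∈ e ε)
    (γ : ℝ) (hγ : 0 < γ)
    (S : Finset V) (hS0 : 0 < hvol e δe S) (hS2 : hvol e δe S ≤ hM e δe / 2)
    (x : V → ℝ) (hx : ∀ y : V → ℝ, Qobj e δe γ S x ≤ Qobj e δe γ S y) :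
    1 - hcond e δe S / γ ≤ ∑ v ∈ S, hdeg e δe v * x v := by
  classical
  have hδ0 : ∀ ε, (0:ℝ) ≤ δe ε := fun ε => zero_le_one.trans (hδe ε)
  -- each vertex has f_ε({v}) = 1 for every incident edge
  have hsplit_v : ∀ (ε) (v : V), v ∈ e ε → hsplit e δe ε {v} = 1 := by
    intro ε v hv
    unfold hsplit
    have h1 : e ε ∩ {v} = {v} :=
      Finset.inter_eq_right.mpr (Finset.singleton_subset_iff.mpr hv)
    have h2 : (e ε \ {v}).card = (e ε).card - 1 := by
      rw [Finset.card_sdiff_of_subset (Finset.singleton_subset_iff.mpr hv), Finset.card_singleton]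
    rw [h1, Finset.card_singleton, h2]
    have h3 : (1:ℝ) ≤ (((e ε).card - 1 : ℕ) : ℝ) := by
      have := hcard ε
      exact_mod_cast (by omega : 1 ≤ (e ε).card - 1)
    rw [Nat.cast_one, min_eq_left h3, min_eq_left (hδe ε)]
  have hd1 : ∀ v : V, (1:ℝ) ≤ hdeg e δe v := by
    intro v
    unfold hdeg
    obtain ⟨ε₀, hε₀⟩ := hcov v
    rw [Finset.sum_congr rfl (fun ε hε => hsplit_v ε v (Finset.mem_filter.mp hε).2),
      Finset.sum_const, nsmul_eq_mul, mul_one]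
    exact Nat.one_le_cast.mpr (Finset.card_pos.mpr
      ⟨ε₀, Finset.mem_filter.mpr ⟨Finset.mem_univ _, hε₀⟩⟩)
  have hsplit_nn : ∀ (ε) (T : Finset V), 0 ≤ hsplit e δe ε T := by
    intro ε T
    exact le_min (le_min (Nat.cast_nonneg _) (Nat.cast_nonneg _)) (hδ0 ε)
  have hcut_nn : 0 ≤ hcut e δe S := Finset.sum_nonneg fun ε _ => hsplit_nn ε S
  set c : ℝ := 1 / hvol e δe S with hc_def
  have hcpos : 0 < c := by rw [hc_def]; positivity
  have hcvol : c * hvol e δe S = 1 := by rw [hc_def]; field_simp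
  have hyb : ∀ v : V, 0 ≤ (if v ∈ S then (1:ℝ) else 0) / hvol e δe S ∧
      (if v ∈ S then (1:ℝ) else 0) / hvol e δe S ≤ c := by
    intro v
    by_cases hv : v ∈ S
    · rw [if_pos hv]
      exact ⟨by positivity, le_of_eq hc_def.symm⟩
    · rw [if_neg hv, zero_div]
      exact ⟨le_rfl, hcpos.le⟩
  -- maximum principle : the minimizer lives in [0, c]
  have hclamp : ∀ v, x v = clampc c (x v) := by
    by_contra hcon
    push_neg at hcon
    obtain ⟨v₀, hv₀⟩ := hcon
    have hlt : Qobj e δe γ S (fun v => clampc c (x v)) < Qobj e δe γ S x := by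
      simp only [Qobj]
      have hA : ∑ v : V, hdeg e δe v *
            ((clampc c (x v)) - (if v ∈ S then (1:ℝ) else 0) / hvol e δe S)^2
          < ∑ v : V, hdeg e δe v *
            (x v - (if v ∈ S then (1:ℝ) else 0) / hvol e δe S)^2 := by
        apply Finset.sum_lt_sum
        · intro v _
          exact mul_le_mul_of_nonneg_left (clampc_sq_le (hyb v).1 (hyb v).2)
            (by linarith [hd1 v])
        · exact ⟨v₀, Finset.mem_univ _, mul_lt_mul_of_pos_left
            (clampc_sq_lt hcpos.le (hyb v₀).1 (hyb v₀).2 hv₀) (by linarith [hd1 v₀])⟩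
      have hB : ∑ ε : E, Qe e δe ε (fun v => clampc c (x v)) ≤ ∑ ε : E, Qe e δe ε x :=
        Finset.sum_le_sum fun ε _ => Qe_clamp_le e δe ε (hδ0 ε) hcpos.le x
      have := mul_lt_mul_of_pos_left hA hγ
      linarith
    exact absurd (hx _) (not_le.mpr hlt)
  have hx0 : ∀ v, 0 ≤ x v := fun v =>
    le_of_le_of_eq (clampc_nonneg hcpos.le (x v)) (hclamp v).symm
  have hxc : ∀ v, x v ≤ c := fun v =>
    le_of_eq_of_le (hclamp v) (clampc_le_c c (x v))
  -- the γ-part of Q along the shift x + t·1_S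
  have hgam : ∀ t : ℝ,
      ∑ v : V, hdeg e δe v *
        ((x v + (if v ∈ S then t else 0)) - (if v ∈ S then (1:ℝ) else 0) / hvol e δe S)^2
      = (∑ v : V, hdeg e δe v * (x v - (if v ∈ S then (1:ℝ) else 0) / hvol e δe S)^2)
        + (2*t*((∑ v ∈ S, hdeg e δe v * x v) - 1) + t^2 * hvol e δe S) := by
    intro t
    have step : ∀ v : V, hdeg e δe v *
          ((x v + (if v ∈ S then t else 0)) - (if v ∈ S then (1:ℝ) else 0) / hvol e δe S)^2
        = hdeg e δe v * (x v - (if v ∈ S then (1:ℝ) else 0) / hvol e δe S)^2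
          + (if v ∈ S then 2*t*(hdeg e δe v * x v) + (t^2 - 2*t*c) * hdeg e δe v else 0) := by
      intro v
      by_cases hv : v ∈ S
      · simp only [if_pos hv]
        rw [hc_def]
        ring
      · simp only [if_neg hv, add_zero]
    rw [Finset.sum_congr rfl (fun v _ => step v), Finset.sum_add_distrib,
      Finset.sum_ite_mem, Finset.univ_inter]
    congr 1
    rw [Finset.sum_add_distrib, ← Finset.mul_sum, ← Finset.mul_sum]
    have hvd : ∑ v ∈ S, hdeg e δe v = hvol e δe S := rfl
    rw [hvd]
    linear_combination (-2*t) * hcvol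
  -- per-edge bound along the shift
  have hedge : ∀ (t η : ℝ), 0 < t → 0 < η → ∀ ε : E,
      Qe e δe ε (fun v => x v + (if v ∈ S then t else 0))
        ≤ Qe e δe ε x + η + (2*t*c + t^2) * hsplit e δe ε S := by
    intro t η ht hη ε
    obtain ⟨a, b, hab⟩ := Qe_near e δe ε x hη
    have h1 : innerQ e δe ε x (clampc c a) (clampc c b) ≤ innerQ e δe ε x a b :=
      innerQ_clamp e δe ε (hδ0 ε) x hclamp a b
    have h2 := edge_shift e δe ε (hδ0 ε) hcpos.le ht.le x hx0 hxc S
      (clampc_nonneg hcpos.le a) (clampc_le_c c a)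
      (clampc_nonneg hcpos.le b) (clampc_le_c c b)
    linarith
  -- master inequality
  have hmaster : ∀ t η : ℝ, 0 < t → 0 < η →
      0 ≤ γ * (2*t*((∑ v ∈ S, hdeg e δe v * x v) - 1) + t^2 * hvol e δe S)
        + (Fintype.card E : ℝ) * η + (2*t*c + t^2) * hcut e δe S := by
    intro t η ht hη
    have hxt := hx (fun v => x v + (if v ∈ S then t else 0))
    simp only [Qobj] at hxt
    rw [hgam t, mul_add] at hxt
    have hBsum : ∑ ε : E, Qe e δe ε (fun v => x v + (if v ∈ S then t else 0))
        ≤ ∑ ε : E, (Qe e δe ε x + η + (2*t*c + t^2) * hsplit e δe ε S) :=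
      Finset.sum_le_sum fun ε _ => hedge t η ht hη ε
    have hrhs : ∑ ε : E, (Qe e δe ε x + η + (2*t*c + t^2) * hsplit e δe ε S)
        = (∑ ε : E, Qe e δe ε x) + (Fintype.card E : ℝ) * η
          + (2*t*c + t^2) * hcut e δe S := by
      rw [Finset.sum_add_distrib, Finset.sum_add_distrib, Finset.sum_const,
        nsmul_eq_mul, ← Finset.mul_sum]
      rfl
    rw [hrhs] at hBsum
    linarith
  -- remove η
  have hstep2 : ∀ t : ℝ, 0 < t →
      0 ≤ γ * (2*t*((∑ v ∈ S, hdeg e δe v * x v) - 1) + t^2 * hvol e δe S)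
        + (2*t*c + t^2) * hcut e δe S := by
    intro t ht
    have h : ∀ η' : ℝ, 0 < η' →
        -(γ * (2*t*((∑ v ∈ S, hdeg e δe v * x v) - 1) + t^2 * hvol e δe S)
          + (2*t*c + t^2) * hcut e δe S) ≤ 0 + η' := by
      intro η' hη'
      have hE0 : (0:ℝ) ≤ (Fintype.card E : ℝ) := Nat.cast_nonneg _
      have hm := hmaster t (η' / ((Fintype.card E : ℝ) + 1)) ht (by positivity)
      have hEb : (Fintype.card E : ℝ) * (η' / ((Fintype.card E : ℝ) + 1)) ≤ η' := by
        rw [mul_div_assoc', div_le_iff₀ (by positivity)]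
        nlinarith
      linarith
    have := le_of_forall_pos_le_add (a := -(γ * (2*t*((∑ v ∈ S, hdeg e δe v * x v) - 1)
      + t^2 * hvol e δe S) + (2*t*c + t^2) * hcut e δe S)) (b := 0)
      (fun ε' hε' => h ε' hε')
    linarith
  -- remove t
  have hfinal : γ * (1 - (∑ v ∈ S, hdeg e δe v * x v)) ≤ c * hcut e δe S := by
    apply le_of_forall_pos_le_add
    intro εv hεv
    have hk0 : 0 ≤ (γ * hvol e δe S + hcut e δe S) / 2 := by
      have : 0 ≤ γ * hvol e δe S := le_of_lt (mul_pos hγ hS0)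
      linarith
    set k : ℝ := (γ * hvol e δe S + hcut e δe S) / 2 with hk
    set t : ℝ := εv / (k + 1) with htdef
    have ht : 0 < t := by rw [htdef]; positivity
    have h2 := hstep2 t ht
    have h3 : γ * (1 - (∑ v ∈ S, hdeg e δe v * x v)) * (2*t)
        ≤ (c * hcut e δe S + t * k) * (2*t) := by
      rw [hk]
      linear_combination h2
    have h4 : γ * (1 - (∑ v ∈ S, hdeg e δe v * x v)) ≤ c * hcut e δe S + t * k :=
      le_of_mul_le_mul_right h3 (by positivity)
    have h5 : t * k ≤ εv := by
      rw [htdef, div_mul_eq_mul_div, div_le_iff₀ (by positivity)]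
      nlinarith
    linarith
  -- conclusion
  have hmin : min (hvol e δe S) (hM e δe - hvol e δe S) = hvol e δe S :=
    min_eq_left (by linarith)
  have hcond_eq : hcond e δe S = c * hcut e δe S := by
    unfold hcond
    rw [hmin, hc_def, one_div, div_eq_mul_inv, mul_comm]
  have h6 : (1:ℝ) - (∑ v ∈ S, hdeg e δe v * x v) ≤ c * hcut e δe S / γ := by
    rw [le_div_iff₀ hγ]
    nlinarith [hfinal]
  rw [hcond_eq]
  linarith
end
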